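/- arXiv:0812.4364 — 2 statements merged into one kernel-verified Lean document; each statement's English description precedes it below -/
import Mathlib

section
/- The action functional S_L is well defined and continuously Fréchet differentiable on 𝒪, and its Fréchet differential at γ = (x,w) ∈ 𝒪 is the bounded linear functional ξ ↦ DS_L(γ)[ξ] = ∫₀¹ ( ∂L/∂q(t,γ_{x,w}(t),w(t))·ξ(t) + ∂L/∂v(t,γ_{x,w}(t),w(t))·z(t) ) dt, where ξ = (y,z) ∈ H and ξ(t) = y + ∫₀^t z(s) ds. -/
open MeasureTheory Set Filter Topology ContDiff
open scoped RealInnerProductSpace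

noncomputable section

/-- Euclidean space `ℝ^n`. -/
abbrev E (n : ℕ) : Type := EuclideanSpace ℝ (Fin n)

/-- Lebesgue measure restricted to the interval `[0,1]`. -/
abbrev μ01 : Measure ℝ := volume.restrict (Set.Icc (0:ℝ) 1)

instance : IsFiniteMeasure μ01 :=
  ⟨by rw [Measure.restrict_apply_univ]; simp [Real.volume_Icc]⟩

/-- The Hilbert space `H = ℝ^n × L²([0,1],ℝ^n)`, the standard model of `H¹([0,1],ℝ^n)`
via `u ↦ (u 0, u')`. -/
abbrev Hsp (n : ℕ) : Type := E n × Lp (E n) 2 μ01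

variable {n : ℕ}

/-- The absolutely continuous path associated to `(x,w) ∈ H`:  `t ↦ x + ∫_0^t w(s) ds`. -/
def pathH (p : Hsp n) : ℝ → E n :=
  fun t => p.1 + ∫ s in Set.Ioc (0:ℝ) t, p.2 s ∂μ01

/-- The open set `𝒪 ⊆ H` of those `(x,w)` whose path stays in `U`. -/
def actO (U : Set (E n)) : Set (Hsp n) :=
  {p | ∀ t ∈ Set.Icc (0:ℝ) 1, pathH p t ∈ U}

/-- The Lagrangian action functional `S_L`. -/
def action (L : ℝ → E n → E n → ℝ) (p : Hsp n) : ℝ :=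
  ∫ t, L t (pathH p t) (p.2 t) ∂μ01

/-- The first differential of the action functional:
`DS_L(p)[ξ] = ∫_0^1 ( ∂L/∂q · ξ + ∂L/∂v · ξ' ) dt`. -/
def dAct (Lq Lv : ℝ → E n → E n → E n) (p ξ : Hsp n) : ℝ :=
  ∫ t, (⟪Lq t (pathH p t) (p.2 t), pathH ξ t⟫ + ⟪Lv t (pathH p t) (p.2 t), ξ.2 t⟫) ∂μ01

/-- The second Gateaux differential of the action functional:
`d²S_L(p)[ξ,η] = ∫_0^1 ( ∂²L/∂v² ξ'·η' + ∂²L/∂v∂q ξ'·η + ∂²L/∂q∂v ξ·η' + ∂²L/∂q² ξ·η ) dt`. -/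
def d2Act (Lvv Lqv Lqq : ℝ → E n → E n → (E n →L[ℝ] E n)) (p ξ η : Hsp n) : ℝ :=
  ∫ t, (⟪Lvv t (pathH p t) (p.2 t) (ξ.2 t), η.2 t⟫
      + ⟪Lqv t (pathH p t) (p.2 t) (pathH ξ t), η.2 t⟫
      + ⟪Lqv t (pathH p t) (p.2 t) (pathH η t), ξ.2 t⟫
      + ⟪Lqq t (pathH p t) (p.2 t) (pathH ξ t), pathH η t⟫) ∂μ01

/-- The `H`-inner product `⟨(x,w),(y,z)⟩ = x·y + ⟨w,z⟩_{L²}`. -/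
def innH (p q : Hsp n) : ℝ := ⟪p.1, q.1⟫ + ⟪p.2, q.2⟫

lemma pathH_add (p q : Hsp n) (t : ℝ) (_ht : t ∈ Set.Icc (0:ℝ) 1) :
    pathH (p + q) t = pathH p t + pathH q t := by
  have hint : ∀ r : Hsp n, Integrable (r.2 : ℝ → E n) (μ01.restrict (Set.Ioc (0:ℝ) t)) :=
    fun r => ((Lp.memLp r.2).integrable (by norm_num)).restrict
  have h1 : (((p + q).2 : Lp (E n) 2 μ01) : ℝ → E n)
      =ᵐ[μ01.restrict (Set.Ioc (0:ℝ) t)] fun s => p.2 s + q.2 s :=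
    ae_restrict_of_ae (Lp.coeFn_add p.2 q.2)
  have h2 : ∫ s in Set.Ioc (0:ℝ) t, (p + q).2 s ∂μ01
      = (∫ s in Set.Ioc (0:ℝ) t, p.2 s ∂μ01) + ∫ s in Set.Ioc (0:ℝ) t, q.2 s ∂μ01 := by
    rw [integral_congr_ae h1]
    exact integral_add (hint p) (hint q)
  simp only [pathH, Prod.fst_add, h2]
  abel

lemma pathH_smul (c : ℝ) (p : Hsp n) (t : ℝ) (_ht : t ∈ Set.Icc (0:ℝ) 1) :
    pathH (c • p) t = c • pathH p t := by
  have h1 : (((c • p).2 : Lp (E n) 2 μ01) : ℝ → E n)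
      =ᵐ[μ01.restrict (Set.Ioc (0:ℝ) t)] fun s => c • (p.2 s) :=
    ae_restrict_of_ae (Lp.coeFn_smul c p.2)
  have h2 : ∫ s in Set.Ioc (0:ℝ) t, (c • p).2 s ∂μ01
      = c • ∫ s in Set.Ioc (0:ℝ) t, p.2 s ∂μ01 := by
    rw [integral_congr_ae h1]
    exact integral_smul c _
  simp only [pathH, Prod.smul_fst, h2, smul_add]

lemma pathH_zero (t : ℝ) (_ht : t ∈ Set.Icc (0:ℝ) 1) : pathH (0 : Hsp n) t = 0 := by
  have h1 : (((0 : Hsp n).2 : Lp (E n) 2 μ01) : ℝ → E n)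
      =ᵐ[μ01.restrict (Set.Ioc (0:ℝ) t)] fun _ => (0 : E n) :=
    ae_restrict_of_ae (Lp.coeFn_zero (E n) 2 μ01)
  simp only [pathH]
  rw [integral_congr_ae h1]
  simp

/-- The closed subspace `H_W = {(x,w) : (γ(0),γ(1)) ∈ W}` of `H`. -/
def HWsub (W : Submodule ℝ (E n × E n)) : Submodule ℝ (Hsp n) where
  carrier := {p | (pathH p 0, pathH p 1) ∈ W}
  add_mem' := by
    intro p q hp hq
    simp only [Set.mem_setOf_eq] at *
    rw [pathH_add p q 0 (by norm_num), pathH_add p q 1 (by norm_num)]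
    exact W.add_mem hp hq
  zero_mem' := by
    simp only [Set.mem_setOf_eq]
    rw [pathH_zero 0 (by norm_num), pathH_zero 1 (by norm_num)]
    exact W.zero_mem
  smul_mem' := by
    intro c p hp
    simp only [Set.mem_setOf_eq] at *
    rw [pathH_smul c p 0 (by norm_num), pathH_smul c p 1 (by norm_num)]
    exact W.smul_mem c hp

/-- The auxiliary inner product `⟨ξ,η⟩₀ = ∫ ∂²L/∂v²(t,0,0) ξ'·η' dt + ∫ ξ·η dt` on `H_W`. -/
def inn0 (Lvv : ℝ → E n → E n → (E n →L[ℝ] E n)) (ξ η : Hsp n) : ℝ :=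
  (∫ t, ⟪Lvv t 0 0 (ξ.2 t), η.2 t⟫ ∂μ01) + ∫ t, ⟪pathH ξ t, pathH η t⟫ ∂μ01

end

noncomputable section
open MeasureTheory Set Filter Topology ContDiff
open scoped RealInnerProductSpace ENNReal

variable {n : ℕ}

instance : IsProbabilityMeasure (μ01) :=
  ⟨by rw [Measure.restrict_apply_univ]; simp [Real.volume_Icc]⟩

lemma ae_mem_Icc : ∀ᵐ t ∂μ01, t ∈ Set.Icc (0:ℝ) 1 :=
  ae_restrict_mem measurableSet_Icc

lemma pathH_continuousOn (p : Hsp n) : ContinuousOn (pathH p) (Set.Icc 0 1) := by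
  have h_int : IntegrableOn (fun s => p.2 s) (Set.Icc (0:ℝ) 1) μ01 := by
    have : Integrable (fun s => p.2 s) μ01 := (Lp.memLp p.2).integrable (by norm_num)
    exact this.integrableOn
  have := intervalIntegral.continuousOn_primitive (μ := μ01) (f := fun s => p.2 s)
    (a := 0) (b := 1) h_int
  exact (continuousOn_const.add this)

lemma integral_norm_le_L2norm (f : Lp (E n) 2 μ01) :
    ∫ t, ‖f t‖ ∂μ01 ≤ ‖f‖ := by
  have hmem : MemLp (f : ℝ → E n) 2 μ01 := Lp.memLp f
  have h1 : eLpNorm (f : ℝ → E n) 1 μ01 ≤ eLpNorm (f : ℝ → E n) 2 μ01 :=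
    eLpNorm_le_eLpNorm_of_exponent_le (by norm_num) hmem.1
  have hint : Integrable (f : ℝ → E n) μ01 := hmem.integrable (by norm_num)
  have : ∫ t, ‖f t‖ ∂μ01 = (eLpNorm (f : ℝ → E n) 1 μ01).toReal := by
    rw [integral_norm_eq_lintegral_enorm hmem.1, eLpNorm_one_eq_lintegral_enorm]
  rw [this, Lp.norm_def]
  exact ENNReal.toReal_mono (hmem.eLpNorm_lt_top).ne h1

lemma pathH_sub_le (ξ : Hsp n) {t : ℝ} (ht : t ∈ Set.Icc (0:ℝ) 1) :
    ‖pathH ξ t‖ ≤ ‖ξ.1‖ + ‖ξ.2‖ := by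
  have h1 : ‖∫ s in Set.Ioc (0:ℝ) t, ξ.2 s ∂μ01‖ ≤ ∫ s in Set.Ioc (0:ℝ) t, ‖ξ.2 s‖ ∂μ01 :=
    norm_integral_le_integral_norm _
  have h2 : ∫ s in Set.Ioc (0:ℝ) t, ‖ξ.2 s‖ ∂μ01 ≤ ∫ s, ‖ξ.2 s‖ ∂μ01 := by
    apply setIntegral_le_integral ((Lp.memLp ξ.2).integrable (by norm_num)).norm
    filter_upwards with s using norm_nonneg _
  calc ‖pathH ξ t‖ ≤ ‖ξ.1‖ + ‖∫ s in Set.Ioc (0:ℝ) t, ξ.2 s ∂μ01‖ := norm_add_le _ _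
    _ ≤ ‖ξ.1‖ + ‖ξ.2‖ := by
        have := integral_norm_le_L2norm ξ.2
        linarith

lemma pathH_le (ξ : Hsp n) {t : ℝ} (ht : t ∈ Set.Icc (0:ℝ) 1) :
    ‖pathH ξ t‖ ≤ 2 * ‖ξ‖ := by
  have := pathH_sub_le ξ ht
  have h1 : ‖ξ.1‖ ≤ ‖ξ‖ := norm_fst_le ξ
  have h2 : ‖ξ.2‖ ≤ ‖ξ‖ := norm_snd_le ξ
  linarith

end
noncomputable section
open MeasureTheory Set Filter Topology ContDiff Classical
open scoped RealInnerProductSpace ENNReal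

variable {n : ℕ}

/-- Composition of a function continuous on an open set with an a.e.-measurable map
that a.e. lands in that set is a.e. measurable. -/
lemma aemeasurable_comp_continuousOn
    {α β γ : Type*} [MeasurableSpace α] {μ : MeasureTheory.Measure α}
    [TopologicalSpace β] [MeasurableSpace β] [BorelSpace β]
    [TopologicalSpace γ] [MeasurableSpace γ] [BorelSpace γ]
    {g : β → γ} {s : Set β} (hs : IsOpen s) (hg : ContinuousOn g s)
    {F : α → β} (hF : AEMeasurable F μ) (hFs : ∀ᵐ x ∂μ, F x ∈ s) :
    AEMeasurable (fun x => g (F x)) μ := by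
  rcases eq_or_ne μ 0 with rfl | hμ
  · exact aemeasurable_zero_measure
  · have hne : (MeasureTheory.ae μ).NeBot := ae_neBot.mpr hμ
    obtain ⟨a₀, ha₀⟩ := hFs.exists
    set b₀ : β := F a₀ with hb₀def
    set F' := hF.mk F with hF'def
    have hF'm : Measurable F' := hF.measurable_mk
    have hFF' : F =ᵐ[μ] F' := hF.ae_eq_mk
    have hF's : ∀ᵐ x ∂μ, F' x ∈ s := by
      filter_upwards [hFs, hFF'] with x h1 h2
      rwa [h2] at h1
    have hsm : MeasurableSet s := hs.measurableSet
    set val : α → β := fun x => if F' x ∈ s then F' x else b₀ with hval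
    have hvalm : Measurable val :=
      Measurable.ite (hF'm hsm) hF'm measurable_const
    have hvalmem : ∀ x, val x ∈ s := by
      intro x; by_cases h : F' x ∈ s <;> simp [hval, h] <;> exact ha₀
    set e : α → s := fun x => ⟨val x, hvalmem x⟩ with he
    have hem : Measurable e := hvalm.subtype_mk
    have hgr : Continuous (s.restrict g) := continuousOn_iff_continuous_restrict.mp hg
    refine ⟨fun x => s.restrict g (e x), (hgr.measurable).comp hem, ?_⟩
    filter_upwards [hFF', hF's] with x h1 h2
    have hvx : val x = F' x := by simp [hval, h2]
    simp only [Set.restrict_apply, he, hvx]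
    rw [h1]
    rfl

/-- Cauchy–Schwarz for real functions in `L²(μ01)`. -/
lemma integral_mul_le_CS {f g : ℝ → ℝ} (hf : MemLp f 2 μ01) (hg : MemLp g 2 μ01) :
    ∫ t, f t * g t ∂μ01 ≤ (eLpNorm f 2 μ01).toReal * (eLpNorm g 2 μ01).toReal := by
  set F : Lp ℝ 2 μ01 := hf.toLp f with hFdef
  set G : Lp ℝ 2 μ01 := hg.toLp g with hGdef
  have hFG : ∫ t, f t * g t ∂μ01 = ⟪F, G⟫ := by
    rw [MeasureTheory.L2.inner_def]
    refine (integral_congr_ae ?_).symm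
    filter_upwards [hf.coeFn_toLp, hg.coeFn_toLp] with t h1 h2
    simp only [hFdef, hGdef, h1, h2, RCLike.inner_apply, conj_trivial, mul_comm]
  have hle : ⟪F, G⟫ ≤ ‖F‖ * ‖G‖ := real_inner_le_norm F G
  have hnF : ‖F‖ = (eLpNorm f 2 μ01).toReal := by rw [hFdef, Lp.norm_toLp]
  have hnG : ‖G‖ = (eLpNorm g 2 μ01).toReal := by rw [hGdef, Lp.norm_toLp]
  rw [hFG]
  rw [hnF, hnG] at hle
  exact hle

end
noncomputable section
open MeasureTheory Set Filter Topology ContDiff Classical Metric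
open scoped RealInnerProductSpace ENNReal

/-- Bundled context for the action functional problem. -/
structure Ctx (n : ℕ) where
  U : Set (E n)
  hU : IsOpen U
  L : ℝ → E n → E n → ℝ
  Lq : ℝ → E n → E n → E n
  Lv : ℝ → E n → E n → E n
  Lvv : ℝ → E n → E n → (E n →L[ℝ] E n)
  Lqv : ℝ → E n → E n → (E n →L[ℝ] E n)
  Lvq : ℝ → E n → E n → (E n →L[ℝ] E n)
  Lqq : ℝ → E n → E n → (E n →L[ℝ] E n)
  hL : ContDiffOn ℝ ∞ (fun z : ℝ × E n × E n => L z.1 z.2.1 z.2.2)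
      (Set.univ ×ˢ U ×ˢ Set.univ)
  hLq : ∀ (t : ℝ), ∀ q ∈ U, ∀ v : E n, HasGradientAt (fun q' => L t q' v) (Lq t q v) q
  hLv : ∀ (t : ℝ), ∀ q ∈ U, ∀ v : E n, HasGradientAt (fun v' => L t q v') (Lv t q v) v
  hLvv : ∀ (t : ℝ), ∀ q ∈ U, ∀ v : E n, HasFDerivAt (fun v' => Lv t q v') (Lvv t q v) v
  hLqv : ∀ (t : ℝ), ∀ q ∈ U, ∀ v : E n, HasFDerivAt (fun q' => Lv t q' v) (Lqv t q v) q
  hLvq : ∀ (t : ℝ), ∀ q ∈ U, ∀ v : E n, HasFDerivAt (fun v' => Lq t q v') (Lvq t q v) v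
  hLqq : ∀ (t : ℝ), ∀ q ∈ U, ∀ v : E n, HasFDerivAt (fun q' => Lq t q' v) (Lqq t q v) q
  l1 : ℝ
  hl1 : 0 < l1
  hB : ∀ t ∈ Set.Icc (0:ℝ) 1, ∀ q ∈ U, ∀ v : E n,
      ‖Lvv t q v‖ ≤ l1 ∧ ‖Lqv t q v‖ ≤ l1 * (1 + ‖v‖) ∧ ‖Lvq t q v‖ ≤ l1 * (1 + ‖v‖)
        ∧ ‖Lqq t q v‖ ≤ l1 * (1 + ‖v‖ ^ 2)

namespace Ctx

variable {n : ℕ} (c : Ctx n)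

/-- `Lv` is `ℓ₁`-Lipschitz in `v`. -/
lemma lv_diff_v {t : ℝ} (ht : t ∈ Set.Icc (0:ℝ) 1) {q : E n} (hq : q ∈ c.U) (v v' : E n) :
    ‖c.Lv t q v' - c.Lv t q v‖ ≤ c.l1 * ‖v' - v‖ := by
  refine Convex.norm_image_sub_le_of_norm_hasFDerivWithin_le
    (f := fun v'' => c.Lv t q v'') (f' := fun v'' => c.Lvv t q v'')
    (fun x _ => (c.hLvv t q hq x).hasFDerivWithinAt)
    (fun x _ => (c.hB t ht q hq x).1) convex_univ (Set.mem_univ v) (Set.mem_univ v')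

/-- `Lq` difference in `v`. -/
lemma lq_diff_v {t : ℝ} (ht : t ∈ Set.Icc (0:ℝ) 1) {q : E n} (hq : q ∈ c.U) (v z : E n) :
    ‖c.Lq t q (v + z) - c.Lq t q v‖ ≤ c.l1 * (1 + ‖v‖ + ‖z‖) * ‖z‖ := by
  have h := Convex.norm_image_sub_le_of_norm_hasFDerivWithin_le
    (f := fun v'' => c.Lq t q v'') (f' := fun v'' => c.Lvq t q v'')
    (x := v) (y := v + z)
    (fun x _ => (c.hLvq t q hq x).hasFDerivWithinAt)
    (fun x hx => by
      have h1 : ‖c.Lvq t q x‖ ≤ c.l1 * (1 + ‖x‖) := (c.hB t ht q hq x).2.2.1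
      have h2 : ‖x‖ ≤ ‖v‖ + ‖z‖ := by
        have h3 := mem_closedBall.mp hx
        rw [dist_eq_norm] at h3
        calc ‖x‖ ≤ ‖v‖ + ‖x - v‖ := by
              have := norm_sub_norm_le x v; linarith [norm_nonneg (x-v)]
          _ ≤ ‖v‖ + ‖z‖ := by linarith
      calc ‖c.Lvq t q x‖ ≤ c.l1 * (1 + ‖x‖) := h1
        _ ≤ c.l1 * (1 + ‖v‖ + ‖z‖) := by
            apply mul_le_mul_of_nonneg_left (by linarith) c.hl1.le)
    (convex_closedBall v ‖z‖)
    (mem_closedBall_self (norm_nonneg z))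
    (by simp [mem_closedBall, dist_eq_norm])
  simpa using h

/-- `Lq` difference in `q`, inside a ball contained in `U`. -/
lemma lq_diff_q {t : ℝ} (ht : t ∈ Set.Icc (0:ℝ) 1) {q : E n} {r : ℝ}
    (hball : closedBall q r ⊆ c.U) {y : E n} (hy : ‖y‖ ≤ r) (v : E n) :
    ‖c.Lq t (q + y) v - c.Lq t q v‖ ≤ c.l1 * (1 + ‖v‖ ^ 2) * ‖y‖ := by
  have h := Convex.norm_image_sub_le_of_norm_hasFDerivWithin_le
    (f := fun q'' => c.Lq t q'' v) (f' := fun q'' => c.Lqq t q'' v)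
    (x := q) (y := q + y)
    (fun x hx => (c.hLqq t x (hball hx) v).hasFDerivWithinAt)
    (fun x hx => (c.hB t ht x (hball hx) v).2.2.2)
    (convex_closedBall q r)
    (mem_closedBall_self (le_trans (norm_nonneg y) hy))
    (by simp [mem_closedBall, dist_eq_norm, hy])
  simpa using h

/-- `Lv` difference in `q`, inside a ball contained in `U`. -/
lemma lv_diff_q {t : ℝ} (ht : t ∈ Set.Icc (0:ℝ) 1) {q : E n} {r : ℝ}
    (hball : closedBall q r ⊆ c.U) {y : E n} (hy : ‖y‖ ≤ r) (v : E n) :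
    ‖c.Lv t (q + y) v - c.Lv t q v‖ ≤ c.l1 * (1 + ‖v‖) * ‖y‖ := by
  have h := Convex.norm_image_sub_le_of_norm_hasFDerivWithin_le
    (f := fun q'' => c.Lv t q'' v) (f' := fun q'' => c.Lqv t q'' v)
    (x := q) (y := q + y)
    (fun x hx => (c.hLqv t x (hball hx) v).hasFDerivWithinAt)
    (fun x hx => (c.hB t ht x (hball hx) v).2.1)
    (convex_closedBall q r)
    (mem_closedBall_self (le_trans (norm_nonneg y) hy))
    (by simp [mem_closedBall, dist_eq_norm, hy])
  simpa using h

/-- First-order Taylor estimate in `v`. -/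
lemma taylor_v {t : ℝ} (ht : t ∈ Set.Icc (0:ℝ) 1) {q : E n} (hq : q ∈ c.U) (v z : E n) :
    |c.L t q (v + z) - c.L t q v - ⟪c.Lv t q v, z⟫| ≤ c.l1 * ‖z‖ ^ 2 := by
  set φ : E n →L[ℝ] ℝ := InnerProductSpace.toDual ℝ (E n) (c.Lv t q v) with hφ
  have h := Convex.norm_image_sub_le_of_norm_hasFDerivWithin_le'
    (f := fun v'' => c.L t q v'')
    (f' := fun v'' => InnerProductSpace.toDual ℝ (E n) (c.Lv t q v''))
    (x := v) (y := v + z)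
    (φ := φ) (C := c.l1 * ‖z‖)
    (fun x _ => ((hasGradientAt_iff_hasFDerivAt.mp (c.hLv t q hq x)).hasFDerivWithinAt))
    (fun x hx => by
      rw [hφ, ← map_sub]
      rw [(InnerProductSpace.toDual ℝ (E n)).norm_map]
      have h2 : ‖x - v‖ ≤ ‖z‖ := by
        have := mem_closedBall.mp hx; rwa [dist_eq_norm] at this
      calc ‖c.Lv t q x - c.Lv t q v‖ ≤ c.l1 * ‖x - v‖ := by
            simpa using c.lv_diff_v ht hq v x
        _ ≤ c.l1 * ‖z‖ := mul_le_mul_of_nonneg_left h2 c.hl1.le)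
    (convex_closedBall v ‖z‖)
    (mem_closedBall_self (norm_nonneg z))
    (by simp [mem_closedBall, dist_eq_norm])
  have hφz : φ ((v + z) - v) = ⟪c.Lv t q v, z⟫ := by
    simp [hφ, InnerProductSpace.toDual_apply_apply]
  rw [hφz] at h
  have hn : ‖(v+z) - v‖ = ‖z‖ := by simp
  rw [hn] at h
  calc |c.L t q (v + z) - c.L t q v - ⟪c.Lv t q v, z⟫| ≤ c.l1 * ‖z‖ * ‖z‖ := h
    _ = c.l1 * ‖z‖ ^ 2 := by ring

/-- First-order Taylor estimate in `q`, inside a ball contained in `U`. -/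
lemma taylor_q {t : ℝ} (ht : t ∈ Set.Icc (0:ℝ) 1) {q : E n} {r : ℝ}
    (hball : closedBall q r ⊆ c.U) {y : E n} (hy : ‖y‖ ≤ r) (v : E n) :
    |c.L t (q + y) v - c.L t q v - ⟪c.Lq t q v, y⟫| ≤ c.l1 * (1 + ‖v‖ ^ 2) * ‖y‖ ^ 2 := by
  have hsub : closedBall q ‖y‖ ⊆ c.U :=
    fun x hx => hball (closedBall_subset_closedBall hy hx)
  set φ : E n →L[ℝ] ℝ := InnerProductSpace.toDual ℝ (E n) (c.Lq t q v) with hφ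
  have h := Convex.norm_image_sub_le_of_norm_hasFDerivWithin_le'
    (f := fun q'' => c.L t q'' v)
    (f' := fun q'' => InnerProductSpace.toDual ℝ (E n) (c.Lq t q'' v))
    (x := q) (y := q + y)
    (φ := φ) (C := c.l1 * (1 + ‖v‖ ^ 2) * ‖y‖)
    (fun x hx => ((hasGradientAt_iff_hasFDerivAt.mp (c.hLq t x (hsub hx) v)).hasFDerivWithinAt))
    (fun x hx => by
      rw [hφ, ← map_sub, (InnerProductSpace.toDual ℝ (E n)).norm_map]
      have h2 : ‖x - q‖ ≤ ‖y‖ := by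
        have := mem_closedBall.mp hx; rwa [dist_eq_norm] at this
      have hsub2 : closedBall q ‖x - q‖ ⊆ c.U :=
        fun u hu => hsub (closedBall_subset_closedBall h2 hu)
      have h3 := c.lq_diff_q ht hsub2 (le_refl ‖x - q‖) v
      have hxq : q + (x - q) = x := by abel
      rw [hxq] at h3
      calc ‖c.Lq t x v - c.Lq t q v‖ ≤ c.l1 * (1 + ‖v‖ ^ 2) * ‖x - q‖ := h3
        _ ≤ c.l1 * (1 + ‖v‖ ^ 2) * ‖y‖ :=
            mul_le_mul_of_nonneg_left h2 (by have := c.hl1; positivity))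
    (convex_closedBall q ‖y‖)
    (mem_closedBall_self (norm_nonneg y))
    (by simp [mem_closedBall, dist_eq_norm])
  have hφy : φ ((q + y) - q) = ⟪c.Lq t q v, y⟫ := by
    simp [hφ, InnerProductSpace.toDual_apply_apply]
  rw [hφy] at h
  have hn : ‖(q+y) - q‖ = ‖y‖ := by simp
  rw [hn] at h
  calc |c.L t (q + y) v - c.L t q v - ⟪c.Lq t q v, y⟫|
      ≤ c.l1 * (1 + ‖v‖ ^ 2) * ‖y‖ * ‖y‖ := h
    _ = c.l1 * (1 + ‖v‖ ^ 2) * ‖y‖ ^ 2 := by ring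

end Ctx
end
noncomputable section
open MeasureTheory Set Filter Topology ContDiff Classical Metric
open scoped RealInnerProductSpace ENNReal

namespace Ctx

variable {n : ℕ} (c : Ctx n)

/-- Master pointwise Taylor estimate. -/
lemma key_taylor {t : ℝ} (ht : t ∈ Set.Icc (0:ℝ) 1) {q : E n} {r : ℝ}
    (hball : closedBall q r ⊆ c.U) {y : E n} (hy : ‖y‖ ≤ r) (v z : E n) :
    |c.L t (q + y) (v + z) - c.L t q v - ⟪c.Lq t q v, y⟫ - ⟪c.Lv t q v, z⟫|
      ≤ c.l1 * ((1 + (‖v‖ + ‖z‖) ^ 2) * ‖y‖ ^ 2 + (1 + ‖v‖ + ‖z‖) * ‖z‖ * ‖y‖ + ‖z‖ ^ 2) := by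
  have hq : q ∈ c.U := hball (mem_closedBall_self (le_trans (norm_nonneg y) hy))
  have hA := c.taylor_q ht hball hy (v + z)
  have hB : |⟪c.Lq t q (v + z) - c.Lq t q v, y⟫|
      ≤ c.l1 * (1 + ‖v‖ + ‖z‖) * ‖z‖ * ‖y‖ := by
    calc |⟪c.Lq t q (v + z) - c.Lq t q v, y⟫|
        ≤ ‖c.Lq t q (v + z) - c.Lq t q v‖ * ‖y‖ := abs_real_inner_le_norm _ _
      _ ≤ c.l1 * (1 + ‖v‖ + ‖z‖) * ‖z‖ * ‖y‖ :=
          mul_le_mul_of_nonneg_right (c.lq_diff_v ht hq v z) (norm_nonneg y)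
  have hC := c.taylor_v ht hq v z
  have hdecomp : c.L t (q + y) (v + z) - c.L t q v - ⟪c.Lq t q v, y⟫ - ⟪c.Lv t q v, z⟫
      = (c.L t (q + y) (v + z) - c.L t q (v + z) - ⟪c.Lq t q (v + z), y⟫)
        + ⟪c.Lq t q (v + z) - c.Lq t q v, y⟫
        + (c.L t q (v + z) - c.L t q v - ⟪c.Lv t q v, z⟫) := by
    rw [inner_sub_left]; ring
  have hvz : 1 + ‖v + z‖ ^ 2 ≤ 1 + (‖v‖ + ‖z‖) ^ 2 := by
    have h1 := norm_add_le v z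
    nlinarith [norm_nonneg (v + z), norm_nonneg v, norm_nonneg z]
  have hA' : |c.L t (q + y) (v + z) - c.L t q (v + z) - ⟪c.Lq t q (v + z), y⟫|
      ≤ c.l1 * (1 + (‖v‖ + ‖z‖) ^ 2) * ‖y‖ ^ 2 := by
    refine le_trans hA ?_
    apply mul_le_mul_of_nonneg_right _ (sq_nonneg ‖y‖)
    exact mul_le_mul_of_nonneg_left hvz c.hl1.le
  calc |c.L t (q + y) (v + z) - c.L t q v - ⟪c.Lq t q v, y⟫ - ⟪c.Lv t q v, z⟫|
      ≤ |c.L t (q + y) (v + z) - c.L t q (v + z) - ⟪c.Lq t q (v + z), y⟫|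
        + |⟪c.Lq t q (v + z) - c.Lq t q v, y⟫|
        + |c.L t q (v + z) - c.L t q v - ⟪c.Lv t q v, z⟫| := by
        rw [hdecomp]; exact (abs_add_le _ _).trans (by gcongr; exact abs_add_le _ _)
    _ ≤ c.l1 * (1 + (‖v‖ + ‖z‖) ^ 2) * ‖y‖ ^ 2
        + c.l1 * (1 + ‖v‖ + ‖z‖) * ‖z‖ * ‖y‖ + c.l1 * ‖z‖ ^ 2 := by
        gcongr
    _ = c.l1 * ((1 + (‖v‖ + ‖z‖) ^ 2) * ‖y‖ ^ 2 + (1 + ‖v‖ + ‖z‖) * ‖z‖ * ‖y‖ + ‖z‖ ^ 2) := by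
        ring

/-- Master pointwise estimate for the variation of `Lq`. -/
lemma key_dLq {t : ℝ} (ht : t ∈ Set.Icc (0:ℝ) 1) {q : E n} {r : ℝ}
    (hball : closedBall q r ⊆ c.U) {y : E n} (hy : ‖y‖ ≤ r) (v z : E n) :
    ‖c.Lq t (q + y) (v + z) - c.Lq t q v‖
      ≤ c.l1 * ((1 + (‖v‖ + ‖z‖) ^ 2) * ‖y‖ + (1 + ‖v‖ + ‖z‖) * ‖z‖) := by
  have hq : q ∈ c.U := hball (mem_closedBall_self (le_trans (norm_nonneg y) hy))
  have h1 := c.lq_diff_q ht hball hy (v + z)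
  have h2 := c.lq_diff_v ht hq v z
  have hvz : 1 + ‖v + z‖ ^ 2 ≤ 1 + (‖v‖ + ‖z‖) ^ 2 := by
    have := norm_add_le v z
    nlinarith [norm_nonneg (v + z), norm_nonneg v, norm_nonneg z]
  calc ‖c.Lq t (q + y) (v + z) - c.Lq t q v‖
      ≤ ‖c.Lq t (q + y) (v + z) - c.Lq t q (v + z)‖ + ‖c.Lq t q (v + z) - c.Lq t q v‖ := by
        have := norm_sub_le_norm_sub_add_norm_sub (c.Lq t (q + y) (v + z)) (c.Lq t q (v + z))
          (c.Lq t q v)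
        linarith
    _ ≤ c.l1 * (1 + (‖v‖ + ‖z‖) ^ 2) * ‖y‖ + c.l1 * (1 + ‖v‖ + ‖z‖) * ‖z‖ := by
        refine add_le_add (le_trans h1 ?_) h2
        exact mul_le_mul_of_nonneg_right
          (mul_le_mul_of_nonneg_left hvz c.hl1.le) (norm_nonneg y)
    _ = c.l1 * ((1 + (‖v‖ + ‖z‖) ^ 2) * ‖y‖ + (1 + ‖v‖ + ‖z‖) * ‖z‖) := by ring

/-- Master pointwise estimate for the variation of `Lv`. -/
lemma key_dLv {t : ℝ} (ht : t ∈ Set.Icc (0:ℝ) 1) {q : E n} {r : ℝ}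
    (hball : closedBall q r ⊆ c.U) {y : E n} (hy : ‖y‖ ≤ r) (v z : E n) :
    ‖c.Lv t (q + y) (v + z) - c.Lv t q v‖
      ≤ c.l1 * ((1 + ‖v‖ + ‖z‖) * ‖y‖ + ‖z‖) := by
  have hq : q ∈ c.U := hball (mem_closedBall_self (le_trans (norm_nonneg y) hy))
  have h1 := c.lv_diff_q ht hball hy (v + z)
  have h2 : ‖c.Lv t q (v + z) - c.Lv t q v‖ ≤ c.l1 * ‖z‖ := by
    have := c.lv_diff_v ht hq v (v + z)
    simpa using this
  have hvz : 1 + ‖v + z‖ ≤ 1 + ‖v‖ + ‖z‖ := by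
    have := norm_add_le v z; linarith
  calc ‖c.Lv t (q + y) (v + z) - c.Lv t q v‖
      ≤ ‖c.Lv t (q + y) (v + z) - c.Lv t q (v + z)‖ + ‖c.Lv t q (v + z) - c.Lv t q v‖ := by
        have := norm_sub_le_norm_sub_add_norm_sub (c.Lv t (q + y) (v + z)) (c.Lv t q (v + z))
          (c.Lv t q v)
        linarith
    _ ≤ c.l1 * (1 + ‖v‖ + ‖z‖) * ‖y‖ + c.l1 * ‖z‖ := by
        refine add_le_add (le_trans h1 ?_) h2
        exact mul_le_mul_of_nonneg_right
          (mul_le_mul_of_nonneg_left hvz c.hl1.le) (norm_nonneg y)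
    _ = c.l1 * ((1 + ‖v‖ + ‖z‖) * ‖y‖ + ‖z‖) := by ring

end Ctx
end
noncomputable section
open MeasureTheory Set Filter Topology ContDiff Classical Metric
open scoped RealInnerProductSpace ENNReal

namespace Ctx

variable {n : ℕ} (c : Ctx n)

/-- The open domain in `ℝ × E n × E n`. -/
def S : Set (ℝ × E n × E n) := Set.univ ×ˢ c.U ×ˢ Set.univ

lemma hS : IsOpen c.S := isOpen_univ.prod (c.hU.prod isOpen_univ)

lemma mem_S {t : ℝ} {q v : E n} (hq : q ∈ c.U) : (t, q, v) ∈ c.S :=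
  ⟨Set.mem_univ _, hq, Set.mem_univ _⟩

/-- The uncurried Lagrangian. -/
def Ltil : ℝ × E n × E n → ℝ := fun z => c.L z.1 z.2.1 z.2.2

lemma L_contOn : ContinuousOn (fun z : ℝ × E n × E n => c.L z.1 z.2.1 z.2.2) c.S :=
  c.hL.continuousOn

end Ctx

/-- The inclusion `y ↦ (0, y, 0)`. -/
def Jq (n : ℕ) : E n →L[ℝ] ℝ × E n × E n :=
  (0 : E n →L[ℝ] ℝ).prod ((ContinuousLinearMap.id ℝ (E n)).prod 0)

/-- The inclusion `z ↦ (0, 0, z)`. -/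
def Jv (n : ℕ) : E n →L[ℝ] ℝ × E n × E n :=
  (0 : E n →L[ℝ] ℝ).prod ((0 : E n →L[ℝ] E n).prod (ContinuousLinearMap.id ℝ (E n)))

namespace Ctx
variable {n : ℕ} (c : Ctx n)

lemma hasFDerivAt_Ltil {z : ℝ × E n × E n} (hz : z ∈ c.S) :
    HasFDerivAt c.Ltil (fderiv ℝ c.Ltil z) z := by
  have hdiff : DifferentiableAt ℝ c.Ltil z := by
    have := (c.hL.differentiableOn (by norm_num)).differentiableAt
      (c.hS.mem_nhds hz)
    exact this
  exact hdiff.hasFDerivAt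

lemma Lq_eq_fderiv {t : ℝ} {q v : E n} (hq : q ∈ c.U) :
    c.Lq t q v = (InnerProductSpace.toDual ℝ (E n)).symm
      ((fderiv ℝ c.Ltil (t, q, v)).comp (Jq n)) := by
  have h1 : HasFDerivAt (fun q' : E n => c.Ltil (t, q', v))
      ((fderiv ℝ c.Ltil (t, q, v)).comp (Jq n)) q := by
    have hincl : HasFDerivAt (fun q' : E n => ((t, q', v) : ℝ × E n × E n)) (Jq n) q :=
      (hasFDerivAt_const t q).prodMk ((hasFDerivAt_id q).prodMk (hasFDerivAt_const v q))
    exact (c.hasFDerivAt_Ltil (c.mem_S hq)).comp q hincl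
  have h2 : HasFDerivAt (fun q' : E n => c.L t q' v)
      (InnerProductSpace.toDual ℝ (E n) (c.Lq t q v)) q :=
    hasGradientAt_iff_hasFDerivAt.mp (c.hLq t q hq v)
  have h3 : InnerProductSpace.toDual ℝ (E n) (c.Lq t q v)
      = (fderiv ℝ c.Ltil (t, q, v)).comp (Jq n) := h2.unique h1
  rw [h3.symm]
  simp

lemma Lv_eq_fderiv {t : ℝ} {q v : E n} (hq : q ∈ c.U) :
    c.Lv t q v = (InnerProductSpace.toDual ℝ (E n)).symm
      ((fderiv ℝ c.Ltil (t, q, v)).comp (Jv n)) := by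
  have h1 : HasFDerivAt (fun v' : E n => c.Ltil (t, q, v'))
      ((fderiv ℝ c.Ltil (t, q, v)).comp (Jv n)) v := by
    have hincl : HasFDerivAt (fun v' : E n => ((t, q, v') : ℝ × E n × E n)) (Jv n) v :=
      (hasFDerivAt_const t v).prodMk ((hasFDerivAt_const q v).prodMk (hasFDerivAt_id v))
    exact (c.hasFDerivAt_Ltil (c.mem_S hq)).comp v hincl
  have h2 : HasFDerivAt (fun v' : E n => c.L t q v')
      (InnerProductSpace.toDual ℝ (E n) (c.Lv t q v)) v :=
    hasGradientAt_iff_hasFDerivAt.mp (c.hLv t q hq v)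
  have h3 : InnerProductSpace.toDual ℝ (E n) (c.Lv t q v)
      = (fderiv ℝ c.Ltil (t, q, v)).comp (Jv n) := h2.unique h1
  rw [h3.symm]
  simp

lemma Lq_contOn : ContinuousOn (fun z : ℝ × E n × E n => c.Lq z.1 z.2.1 z.2.2) c.S := by
  have hfd : ContinuousOn (fderiv ℝ c.Ltil) c.S :=
    (c.hL.continuousOn_fderiv_of_isOpen c.hS (by norm_num))
  have hcomp : ContinuousOn (fun z : ℝ × E n × E n =>
      (InnerProductSpace.toDual ℝ (E n)).symm ((fderiv ℝ c.Ltil z).comp (Jq n))) c.S := by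
    apply ((InnerProductSpace.toDual ℝ (E n)).symm.continuous).comp_continuousOn
    exact hfd.clm_comp continuousOn_const
  refine ContinuousOn.congr hcomp ?_
  rintro ⟨t, q, v⟩ ⟨-, hq, -⟩
  exact c.Lq_eq_fderiv hq

lemma Lv_contOn : ContinuousOn (fun z : ℝ × E n × E n => c.Lv z.1 z.2.1 z.2.2) c.S := by
  have hfd : ContinuousOn (fderiv ℝ c.Ltil) c.S :=
    (c.hL.continuousOn_fderiv_of_isOpen c.hS (by norm_num))
  have hcomp : ContinuousOn (fun z : ℝ × E n × E n =>
      (InnerProductSpace.toDual ℝ (E n)).symm ((fderiv ℝ c.Ltil z).comp (Jv n))) c.S := by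
    apply ((InnerProductSpace.toDual ℝ (E n)).symm.continuous).comp_continuousOn
    exact hfd.clm_comp continuousOn_const
  refine ContinuousOn.congr hcomp ?_
  rintro ⟨t, q, v⟩ ⟨-, hq, -⟩
  exact c.Lv_eq_fderiv hq

end Ctx
end
noncomputable section
open MeasureTheory Set Filter Topology ContDiff Classical Metric
open scoped RealInnerProductSpace ENNReal

variable {n : ℕ}

/-- Product of two `L²` real functions is integrable. -/
lemma integrable_mul_L2 {f g : ℝ → ℝ} (hf : MemLp f 2 μ01) (hg : MemLp g 2 μ01) :
    Integrable (fun t => f t * g t) μ01 := by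
  have h := MeasureTheory.L2.integrable_inner (𝕜 := ℝ) (hf.toLp f) (hg.toLp g)
  refine h.congr ?_
  filter_upwards [hf.coeFn_toLp, hg.coeFn_toLp] with t h1 h2
  simp [h1, h2, RCLike.inner_apply, mul_comm]

lemma memLp_norm_Lp (f : Lp (E n) 2 μ01) : MemLp (fun t => ‖f t‖) 2 μ01 :=
  (Lp.memLp f).norm

lemma integrable_norm_sq (f : Lp (E n) 2 μ01) : Integrable (fun t => ‖f t‖ ^ 2) μ01 := by
  have := integrable_mul_L2 (memLp_norm_Lp f) (memLp_norm_Lp f)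
  refine this.congr ?_
  filter_upwards with t
  ring

namespace Ctx

variable (c : Ctx n)

/-- Choice of a margin `δ` and growth constant `M` adapted to an admissible point `p`. -/
lemma exists_delta_M {p : Hsp n} (hp : p ∈ actO c.U) :
    ∃ δ > (0:ℝ), ∃ M > (0:ℝ),
      ∀ t ∈ Set.Icc (0:ℝ) 1, ∀ y : E n, ‖y‖ ≤ δ →
        (closedBall (pathH p t) δ ⊆ c.U) ∧
        ∀ v : E n, |c.L t (pathH p t + y) v| ≤ M * (1 + ‖v‖ ^ 2) ∧
          ‖c.Lq t (pathH p t + y) v‖ ≤ M * (1 + ‖v‖ ^ 2) ∧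
          ‖c.Lv t (pathH p t + y) v‖ ≤ M * (1 + ‖v‖) := by
  have hKcomp : IsCompact (pathH p '' Set.Icc 0 1) :=
    (isCompact_Icc).image_of_continuousOn (pathH_continuousOn p)
  have hKU : pathH p '' Set.Icc 0 1 ⊆ c.U := by
    rintro x ⟨t, ht, rfl⟩; exact hp t ht
  obtain ⟨δ, hδpos, hδsub⟩ := hKcomp.exists_cthickening_subset_open c.hU hKU
  set K' := cthickening δ (pathH p '' Set.Icc 0 1) with hK'def
  have hK'comp : IsCompact K' := hKcomp.cthickening
  have hK'U : K' ⊆ c.U := hδsub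
  -- bound the three functions on the compact set Icc 0 1 ×ˢ K'
  set T : Set (ℝ × E n) := (Set.Icc (0:ℝ) 1) ×ˢ K' with hTdef
  have hTcomp : IsCompact T := isCompact_Icc.prod hK'comp
  have hmap : ∀ x ∈ T, ((x.1, x.2, (0:E n)) : ℝ × E n × E n) ∈ c.S := by
    rintro ⟨t, q⟩ ⟨-, hq⟩
    exact c.mem_S (hK'U hq)
  have hcont0 : ContinuousOn (fun x : ℝ × E n => ((x.1, x.2, (0:E n)) : ℝ × E n × E n)) T :=
    (continuous_fst.prodMk (continuous_snd.prodMk continuous_const)).continuousOn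
  have hc1 : ContinuousOn (fun x : ℝ × E n => c.L x.1 x.2 0) T :=
    (c.L_contOn.comp hcont0 hmap)
  have hc2 : ContinuousOn (fun x : ℝ × E n => c.Lq x.1 x.2 0) T :=
    (c.Lq_contOn.comp hcont0 hmap)
  have hc3 : ContinuousOn (fun x : ℝ × E n => c.Lv x.1 x.2 0) T :=
    (c.Lv_contOn.comp hcont0 hmap)
  obtain ⟨M1, hM1⟩ := hTcomp.exists_bound_of_continuousOn hc1
  obtain ⟨M2, hM2⟩ := hTcomp.exists_bound_of_continuousOn hc2
  obtain ⟨M3, hM3⟩ := hTcomp.exists_bound_of_continuousOn hc3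
  set M0 : ℝ := max (max M1 M2) (max M3 0) with hM0def
  have hM0nn : 0 ≤ M0 := le_max_of_le_right (le_max_right _ _)
  have hM01 : ∀ x ∈ T, |c.L x.1 x.2 0| ≤ M0 := fun x hx =>
    le_trans (by simpa using hM1 x hx) (le_max_of_le_left (le_max_left _ _))
  have hM02 : ∀ x ∈ T, ‖c.Lq x.1 x.2 0‖ ≤ M0 := fun x hx =>
    le_trans (hM2 x hx) (le_max_of_le_left (le_max_right _ _))
  have hM03 : ∀ x ∈ T, ‖c.Lv x.1 x.2 0‖ ≤ M0 := fun x hx =>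
    le_trans (hM3 x hx) (le_max_of_le_right (le_max_left _ _))
  refine ⟨δ, hδpos, 2*M0 + 2*c.l1 + 1, by nlinarith [c.hl1, hM0nn], ?_⟩
  intro t ht y hy
  have hγK : pathH p t ∈ pathH p '' Set.Icc 0 1 := Set.mem_image_of_mem _ ht
  have hballU : closedBall (pathH p t) δ ⊆ c.U := by
    intro x hx
    apply hK'U
    exact Metric.mem_cthickening_of_dist_le x (pathH p t) δ _ hγK (mem_closedBall.mp hx)
  refine ⟨hballU, ?_⟩
  intro v
  set q : E n := pathH p t + y with hqdef
  have hqK' : q ∈ K' := by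
    apply Metric.mem_cthickening_of_dist_le q (pathH p t) δ _ hγK
    rw [dist_eq_norm, hqdef]
    simpa using hy
  have hqT : ((t, q) : ℝ × E n) ∈ T := ⟨ht, hqK'⟩
  have hqU : q ∈ c.U := hK'U hqK'
  have hvsq : ‖v‖ ≤ 1 + ‖v‖ ^ 2 := by nlinarith [sq_nonneg (‖v‖ - 1)]
  -- Lv bound
  have hLvb : ‖c.Lv t q v‖ ≤ M0 + c.l1 * ‖v‖ := by
    have h1 := c.lv_diff_v ht hqU 0 v
    have h2 := hM03 (t, q) hqT
    have := norm_le_insert' (c.Lv t q v) (c.Lv t q 0)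
    have h3 : ‖c.Lv t q v‖ ≤ ‖c.Lv t q 0‖ + ‖c.Lv t q v - c.Lv t q 0‖ := by
      have := norm_sub_norm_le (c.Lv t q v) (c.Lv t q 0); linarith [norm_nonneg
        (c.Lv t q v - c.Lv t q 0)]
    simp only [sub_zero] at h1
    linarith
  -- Lq bound
  have hLqb : ‖c.Lq t q v‖ ≤ M0 + c.l1 * (1 + ‖v‖) * ‖v‖ := by
    have h1 := c.lq_diff_v ht hqU 0 v
    simp only [zero_add, norm_zero, add_zero] at h1
    have h2 := hM02 (t, q) hqT
    have h3 : ‖c.Lq t q v‖ ≤ ‖c.Lq t q 0‖ + ‖c.Lq t q v - c.Lq t q 0‖ := by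
      have := norm_sub_norm_le (c.Lq t q v) (c.Lq t q 0); linarith [norm_nonneg
        (c.Lq t q v - c.Lq t q 0)]
    linarith
  -- L bound
  have hLb : |c.L t q v| ≤ M0 + c.l1 * ‖v‖ ^ 2 + M0 * ‖v‖ := by
    have h1 := c.taylor_v ht hqU 0 v
    simp only [zero_add] at h1
    have h2 := hM01 (t, q) hqT
    have h4 : |⟪c.Lv t q 0, v⟫| ≤ M0 * ‖v‖ := by
      refine le_trans (abs_real_inner_le_norm _ _) ?_
      exact mul_le_mul_of_nonneg_right (hM03 (t, q) hqT) (norm_nonneg v)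
    have h5 : |c.L t q v| ≤ |c.L t q 0| + |c.L t q v - c.L t q 0 - ⟪c.Lv t q 0, v⟫|
        + |⟪c.Lv t q 0, v⟫| := by
      have := abs_add_le (c.L t q v - c.L t q 0 - ⟪c.Lv t q 0, v⟫) (⟪c.Lv t q 0, v⟫)
      have heq : c.L t q v - c.L t q 0 - ⟪c.Lv t q 0, v⟫ + ⟪c.Lv t q 0, v⟫
          = c.L t q v - c.L t q 0 := by ring
      rw [heq] at this
      have := abs_add_le (c.L t q 0) (c.L t q v - c.L t q 0)
      simp only [add_sub_cancel] at this
      have h6 := abs_add_le (c.L t q v - c.L t q 0 - ⟪c.Lv t q 0, v⟫) (⟪c.Lv t q 0, v⟫)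
      rw [heq] at h6
      linarith
    linarith
  refine ⟨?_, ?_, ?_⟩
  · have : M0 * ‖v‖ ≤ M0 * (1 + ‖v‖^2) := mul_le_mul_of_nonneg_left hvsq hM0nn
    nlinarith [sq_nonneg ‖v‖, c.hl1, norm_nonneg v]
  · have h1 : c.l1 * (1 + ‖v‖) * ‖v‖ = c.l1 * ‖v‖ + c.l1 * ‖v‖^2 := by ring
    have h2 : c.l1 * ‖v‖ ≤ c.l1 * (1 + ‖v‖^2) := mul_le_mul_of_nonneg_left hvsq c.hl1.le
    nlinarith [sq_nonneg ‖v‖, c.hl1, norm_nonneg v]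
  · nlinarith [norm_nonneg v, c.hl1]

end Ctx
end
noncomputable section
open MeasureTheory Set Filter Topology ContDiff Classical Metric
open scoped RealInnerProductSpace ENNReal

variable {n : ℕ}

lemma aesm_pathH (p : Hsp n) : AEStronglyMeasurable (pathH p) μ01 :=
  (pathH_continuousOn p).aestronglyMeasurable measurableSet_Icc

lemma integrable_one_add_sq (f : Lp (E n) 2 μ01) :
    Integrable (fun t => 1 + ‖f t‖ ^ 2) μ01 :=
  (integrable_const 1).add (integrable_norm_sq f)

set_option maxHeartbeats 1000000

namespace Ctx

variable (c : Ctx n)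

/-- Composition of a continuous function on `S` with an admissible path data. -/
lemma aesm_comp {β : Type*} [NormedAddCommGroup β] [MeasurableSpace β] [BorelSpace β]
    [SecondCountableTopology β]
    {p : Hsp n} (hp : p ∈ actO c.U) {g : ℝ × E n × E n → β}
    (hg : ContinuousOn g c.S) :
    AEStronglyMeasurable (fun t => g (t, pathH p t, p.2 t)) μ01 := by
  have h1 : AEMeasurable (pathH p) μ01 := (aesm_pathH p).aemeasurable
  have h2 : AEMeasurable (fun t => p.2 t) μ01 := (Lp.aestronglyMeasurable p.2).aemeasurable
  have hF : AEMeasurable (fun t => ((t, pathH p t, p.2 t) : ℝ × E n × E n)) μ01 :=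
    aemeasurable_id.prodMk (h1.prodMk h2)
  have hFs : ∀ᵐ t ∂μ01, ((t, pathH p t, p.2 t) : ℝ × E n × E n) ∈ c.S := by
    filter_upwards [ae_mem_Icc] with t ht
    exact c.mem_S (hp t ht)
  exact (aemeasurable_comp_continuousOn c.hS hg hF hFs).aestronglyMeasurable

lemma aesm_L {p : Hsp n} (hp : p ∈ actO c.U) :
    AEStronglyMeasurable (fun t => c.L t (pathH p t) (p.2 t)) μ01 :=
  c.aesm_comp hp c.L_contOn

lemma aesm_Lq {p : Hsp n} (hp : p ∈ actO c.U) :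
    AEStronglyMeasurable (fun t => c.Lq t (pathH p t) (p.2 t)) μ01 :=
  c.aesm_comp hp c.Lq_contOn

lemma aesm_Lv {p : Hsp n} (hp : p ∈ actO c.U) :
    AEStronglyMeasurable (fun t => c.Lv t (pathH p t) (p.2 t)) μ01 :=
  c.aesm_comp hp c.Lv_contOn

lemma integrable_L {p : Hsp n} (hp : p ∈ actO c.U) :
    Integrable (fun t => c.L t (pathH p t) (p.2 t)) μ01 := by
  obtain ⟨δ, hδ, M, hM, hprop⟩ := c.exists_delta_M hp
  refine Integrable.mono' ((integrable_one_add_sq p.2).const_mul M) (c.aesm_L hp) ?_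
  filter_upwards [ae_mem_Icc] with t ht
  have h := ((hprop t ht 0 (by simp [hδ.le])).2 (p.2 t)).1
  rw [add_zero] at h
  simpa [Real.norm_eq_abs] using h

lemma integrable_Lq {p : Hsp n} (hp : p ∈ actO c.U) :
    Integrable (fun t => c.Lq t (pathH p t) (p.2 t)) μ01 := by
  obtain ⟨δ, hδ, M, hM, hprop⟩ := c.exists_delta_M hp
  refine Integrable.mono' ((integrable_one_add_sq p.2).const_mul M) (c.aesm_Lq hp) ?_
  filter_upwards [ae_mem_Icc] with t ht
  have h := ((hprop t ht 0 (by simp [hδ.le])).2 (p.2 t)).2.1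
  rw [add_zero] at h
  simpa using h

lemma memLp_Lv {p : Hsp n} (hp : p ∈ actO c.U) :
    MemLp (fun t => c.Lv t (pathH p t) (p.2 t)) 2 μ01 := by
  obtain ⟨δ, hδ, M, hM, hprop⟩ := c.exists_delta_M hp
  have hg : MemLp (fun t => M * (1 + ‖p.2 t‖)) 2 μ01 :=
    (((memLp_const (1:ℝ)).add (Lp.memLp p.2).norm).const_mul M)
  refine MemLp.of_le hg (c.aesm_Lv hp) ?_
  filter_upwards [ae_mem_Icc] with t ht
  have h := ((hprop t ht 0 (by simp [hδ.le])).2 (p.2 t)).2.2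
  rw [add_zero] at h
  have hnn : (0:ℝ) ≤ M * (1 + ‖p.2 t‖) := by positivity
  rw [Real.norm_eq_abs, abs_of_nonneg hnn]
  exact h

lemma integrable_inner_Lq {p : Hsp n} (hp : p ∈ actO c.U) (ξ : Hsp n) :
    Integrable (fun t => ⟪c.Lq t (pathH p t) (p.2 t), pathH ξ t⟫) μ01 := by
  refine Integrable.mono' (((c.integrable_Lq hp).norm).mul_const (2 * ‖ξ‖))
    ((c.aesm_Lq hp).inner (aesm_pathH ξ)) ?_
  filter_upwards [ae_mem_Icc] with t ht
  calc ‖⟪c.Lq t (pathH p t) (p.2 t), pathH ξ t⟫‖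
      ≤ ‖c.Lq t (pathH p t) (p.2 t)‖ * ‖pathH ξ t‖ := norm_inner_le_norm _ _
    _ ≤ ‖c.Lq t (pathH p t) (p.2 t)‖ * (2 * ‖ξ‖) :=
        mul_le_mul_of_nonneg_left (pathH_le ξ ht) (norm_nonneg _)

lemma integrable_inner_Lv {p : Hsp n} (hp : p ∈ actO c.U) (ξ : Hsp n) :
    Integrable (fun t => ⟪c.Lv t (pathH p t) (p.2 t), ξ.2 t⟫) μ01 := by
  refine Integrable.mono' (integrable_mul_L2 ((c.memLp_Lv hp).norm) (memLp_norm_Lp ξ.2))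
    ((c.aesm_Lv hp).inner (Lp.aestronglyMeasurable ξ.2)) ?_
  filter_upwards with t
  calc ‖⟪c.Lv t (pathH p t) (p.2 t), ξ.2 t⟫‖
      ≤ ‖c.Lv t (pathH p t) (p.2 t)‖ * ‖ξ.2 t‖ := norm_inner_le_norm _ _
    _ ≤ ‖c.Lv t (pathH p t) (p.2 t)‖ * ‖ξ.2 t‖ := le_refl _

end Ctx
end
noncomputable section
open MeasureTheory Set Filter Topology ContDiff Classical Metric
open scoped RealInnerProductSpace ENNReal

namespace Ctx

variable {n : ℕ} (c : Ctx n)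

lemma dAct_add {p : Hsp n} (hp : p ∈ actO c.U) (ξ η : Hsp n) :
    dAct c.Lq c.Lv p (ξ + η) = dAct c.Lq c.Lv p ξ + dAct c.Lq c.Lv p η := by
  unfold dAct
  have h1 : Integrable (fun t => ⟪c.Lq t (pathH p t) (p.2 t), pathH ξ t⟫
      + ⟪c.Lv t (pathH p t) (p.2 t), ξ.2 t⟫) μ01 :=
    (c.integrable_inner_Lq hp ξ).add (c.integrable_inner_Lv hp ξ)
  have h2 : Integrable (fun t => ⟪c.Lq t (pathH p t) (p.2 t), pathH η t⟫
      + ⟪c.Lv t (pathH p t) (p.2 t), η.2 t⟫) μ01 :=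
    (c.integrable_inner_Lq hp η).add (c.integrable_inner_Lv hp η)
  have hco : ((ξ + η).2 : ℝ → E n) =ᵐ[μ01] fun t => ξ.2 t + η.2 t := Lp.coeFn_add ξ.2 η.2
  have hcongr : ∫ t, (⟪c.Lq t (pathH p t) (p.2 t), pathH (ξ + η) t⟫
      + ⟪c.Lv t (pathH p t) (p.2 t), (ξ + η).2 t⟫) ∂μ01
      = ∫ t, ((⟪c.Lq t (pathH p t) (p.2 t), pathH ξ t⟫
          + ⟪c.Lv t (pathH p t) (p.2 t), ξ.2 t⟫)
        + (⟪c.Lq t (pathH p t) (p.2 t), pathH η t⟫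
          + ⟪c.Lv t (pathH p t) (p.2 t), η.2 t⟫)) ∂μ01 := by
    apply integral_congr_ae
    filter_upwards [ae_mem_Icc, hco] with t ht hc
    rw [pathH_add ξ η t ht, hc, inner_add_right, inner_add_right]
    ring
  rw [hcongr, integral_add h1 h2]

lemma dAct_smul {p : Hsp n} (hp : p ∈ actO c.U) (a : ℝ) (ξ : Hsp n) :
    dAct c.Lq c.Lv p (a • ξ) = a * dAct c.Lq c.Lv p ξ := by
  unfold dAct
  have hco : ((a • ξ).2 : ℝ → E n) =ᵐ[μ01] fun t => a • (ξ.2 t) := Lp.coeFn_smul a ξ.2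
  have hcongr : ∫ t, (⟪c.Lq t (pathH p t) (p.2 t), pathH (a • ξ) t⟫
      + ⟪c.Lv t (pathH p t) (p.2 t), (a • ξ).2 t⟫) ∂μ01
      = ∫ t, a • (⟪c.Lq t (pathH p t) (p.2 t), pathH ξ t⟫
          + ⟪c.Lv t (pathH p t) (p.2 t), ξ.2 t⟫) ∂μ01 := by
    apply integral_congr_ae
    filter_upwards [ae_mem_Icc, hco] with t ht hc
    rw [pathH_smul a ξ t ht, hc, inner_smul_right, inner_smul_right]
    simp only [smul_eq_mul]
    ring
  rw [hcongr, integral_smul]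
  simp [smul_eq_mul]

lemma dAct_bound {p : Hsp n} (hp : p ∈ actO c.U) (ξ : Hsp n) :
    |dAct c.Lq c.Lv p ξ|
      ≤ (2 * (∫ t, ‖c.Lq t (pathH p t) (p.2 t)‖ ∂μ01)
          + (eLpNorm (fun t => c.Lv t (pathH p t) (p.2 t)) 2 μ01).toReal) * ‖ξ‖ := by
  set ILq : ℝ := ∫ t, ‖c.Lq t (pathH p t) (p.2 t)‖ ∂μ01 with hILq
  set NLv : ℝ := (eLpNorm (fun t => c.Lv t (pathH p t) (p.2 t)) 2 μ01).toReal with hNLv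
  have hint1 : Integrable (fun t => ‖c.Lq t (pathH p t) (p.2 t)‖ * (2 * ‖ξ‖)) μ01 :=
    ((c.integrable_Lq hp).norm).mul_const _
  have hint2 : Integrable (fun t => ‖c.Lv t (pathH p t) (p.2 t)‖ * ‖ξ.2 t‖) μ01 :=
    integrable_mul_L2 ((c.memLp_Lv hp).norm) (memLp_norm_Lp ξ.2)
  have hb : |dAct c.Lq c.Lv p ξ|
      ≤ ∫ t, (‖c.Lq t (pathH p t) (p.2 t)‖ * (2 * ‖ξ‖)
        + ‖c.Lv t (pathH p t) (p.2 t)‖ * ‖ξ.2 t‖) ∂μ01 := by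
    rw [← Real.norm_eq_abs]
    refine norm_integral_le_of_norm_le (hint1.add hint2) ?_
    filter_upwards [ae_mem_Icc] with t ht
    refine le_trans (norm_add_le _ _) (add_le_add ?_ ?_)
    · calc ‖⟪c.Lq t (pathH p t) (p.2 t), pathH ξ t⟫‖
          ≤ ‖c.Lq t (pathH p t) (p.2 t)‖ * ‖pathH ξ t‖ := norm_inner_le_norm _ _
        _ ≤ ‖c.Lq t (pathH p t) (p.2 t)‖ * (2 * ‖ξ‖) :=
            mul_le_mul_of_nonneg_left (pathH_le ξ ht) (norm_nonneg _)
    · exact norm_inner_le_norm _ _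
  have hsplit : ∫ t, (‖c.Lq t (pathH p t) (p.2 t)‖ * (2 * ‖ξ‖)
      + ‖c.Lv t (pathH p t) (p.2 t)‖ * ‖ξ.2 t‖) ∂μ01
      = ILq * (2 * ‖ξ‖) + ∫ t, ‖c.Lv t (pathH p t) (p.2 t)‖ * ‖ξ.2 t‖ ∂μ01 := by
    rw [integral_add hint1 hint2, integral_mul_const]
  have hCS : ∫ t, ‖c.Lv t (pathH p t) (p.2 t)‖ * ‖ξ.2 t‖ ∂μ01 ≤ NLv * ‖ξ.2‖ := by
    have h := integral_mul_le_CS ((c.memLp_Lv hp).norm) (memLp_norm_Lp ξ.2)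
    rw [eLpNorm_norm, eLpNorm_norm] at h
    rw [hNLv]
    have : ‖ξ.2‖ = (eLpNorm (ξ.2 : ℝ → E n) 2 μ01).toReal := Lp.norm_def ξ.2
    rw [this]
    exact h
  have h0 : (0:ℝ) ≤ ILq := by
    rw [hILq]; exact integral_nonneg fun t => norm_nonneg _
  have h1 : (0:ℝ) ≤ NLv := ENNReal.toReal_nonneg
  have h2 : ‖ξ.2‖ ≤ ‖ξ‖ := norm_snd_le ξ
  have h3 : (0:ℝ) ≤ ‖ξ‖ := norm_nonneg ξ
  calc |dAct c.Lq c.Lv p ξ| ≤ ILq * (2 * ‖ξ‖)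
        + ∫ t, ‖c.Lv t (pathH p t) (p.2 t)‖ * ‖ξ.2 t‖ ∂μ01 := by rw [← hsplit]; exact hb
    _ ≤ ILq * (2 * ‖ξ‖) + NLv * ‖ξ.2‖ := by linarith
    _ ≤ (2 * ILq + NLv) * ‖ξ‖ := by nlinarith

/-- The candidate differential at an admissible point, as a continuous linear functional. -/
def mkD (p : Hsp n) (hp : p ∈ actO c.U) : Hsp n →L[ℝ] ℝ :=
  LinearMap.mkContinuous
    { toFun := fun ξ => dAct c.Lq c.Lv p ξ
      map_add' := c.dAct_add hp
      map_smul' := fun a ξ => c.dAct_smul hp a ξ }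
    (2 * (∫ t, ‖c.Lq t (pathH p t) (p.2 t)‖ ∂μ01)
      + (eLpNorm (fun t => c.Lv t (pathH p t) (p.2 t)) 2 μ01).toReal)
    (fun ξ => by simpa [Real.norm_eq_abs] using c.dAct_bound hp ξ)

lemma mkD_apply {p : Hsp n} (hp : p ∈ actO c.U) (ξ : Hsp n) :
    c.mkD p hp ξ = dAct c.Lq c.Lv p ξ := rfl

/-- The global differential map. -/
def DD : Hsp n → (Hsp n →L[ℝ] ℝ) := fun p =>
  if h : p ∈ actO c.U then c.mkD p h else 0

lemma DD_eq_dAct {p : Hsp n} (hp : p ∈ actO c.U) (ξ : Hsp n) :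
    c.DD p ξ = dAct c.Lq c.Lv p ξ := by
  rw [DD, dif_pos hp, mkD_apply]

end Ctx
end
noncomputable section
open MeasureTheory Set Filter Topology ContDiff Classical Metric
open scoped RealInnerProductSpace ENNReal

variable {n : ℕ}

lemma toReal_eLpNorm_add {f g : ℝ → ℝ} (hf : MemLp f 2 μ01) (hg : MemLp g 2 μ01) :
    (eLpNorm (fun t => f t + g t) 2 μ01).toReal
      ≤ (eLpNorm f 2 μ01).toReal + (eLpNorm g 2 μ01).toReal := by
  have heq : (fun t => f t + g t) = f + g := rfl
  have h := eLpNorm_add_le hf.1 hg.1 (by norm_num : (1:ℝ≥0∞) ≤ 2)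
  rw [← heq] at h
  calc (eLpNorm (fun t => f t + g t) 2 μ01).toReal
      ≤ (eLpNorm f 2 μ01 + eLpNorm g 2 μ01).toReal :=
        ENNReal.toReal_mono (ENNReal.add_ne_top.mpr ⟨hf.2.ne, hg.2.ne⟩) h
    _ = _ := ENNReal.toReal_add hf.2.ne hg.2.ne

lemma toReal_eLpNorm_const_one :
    (eLpNorm (fun _ : ℝ => (1:ℝ)) 2 μ01).toReal = 1 := by
  rw [eLpNorm_const (1:ℝ) (by norm_num) (by
    intro h
    have := measure_univ (μ := μ01)
    rw [h] at this
    simp at this)]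
  simp [measure_univ]

lemma toReal_eLpNorm_coe (w : Lp (E n) 2 μ01) :
    (eLpNorm (fun t => ‖w t‖) 2 μ01).toReal = ‖w‖ := by
  rw [eLpNorm_norm, ← Lp.norm_def]

set_option maxHeartbeats 2000000

namespace Ctx

variable (c : Ctx n)

/-- The quantitative differentiability estimate. -/
lemma key_est {p : Hsp n} (hp : p ∈ actO c.U) :
    ∃ δ > (0:ℝ), ∃ C > (0:ℝ), ∀ ξ : Hsp n, ‖ξ‖ ≤ δ/2 →
      (p + ξ ∈ actO c.U) ∧
      |action c.L (p + ξ) - action c.L p - dAct c.Lq c.Lv p ξ| ≤ C * ‖ξ‖ ^ 2 := by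
  obtain ⟨δ, hδ, M, hM, hprop⟩ := c.exists_delta_M hp
  set Nw : ℝ := ‖p.2‖ with hNw
  have hNw0 : 0 ≤ Nw := norm_nonneg _
  set C : ℝ := c.l1 * (4 * (1 + (Nw + δ)^2) + 2 * (1 + Nw + δ) + 1) with hC
  have hC0 : 0 < C := by nlinarith [c.hl1, sq_nonneg (Nw + δ)]
  refine ⟨δ, hδ, C, hC0, ?_⟩
  intro ξ hξn
  have hξ0 : 0 ≤ ‖ξ‖ := norm_nonneg ξ
  have h2ξδ : 2 * ‖ξ‖ ≤ δ := by linarith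
  set Nz : ℝ := ‖ξ.2‖ with hNz
  have hNz0 : 0 ≤ Nz := norm_nonneg _
  have hNzξ : Nz ≤ ‖ξ‖ := norm_snd_le ξ
  have hYle : ∀ t ∈ Set.Icc (0:ℝ) 1, ‖pathH ξ t‖ ≤ 2 * ‖ξ‖ := fun t ht => pathH_le ξ ht
  -- the perturbed point is admissible
  have hmem : p + ξ ∈ actO c.U := by
    intro t ht
    rw [pathH_add p ξ t ht]
    refine (hprop t ht 0 (by simp [hδ.le])).1 ?_
    rw [mem_closedBall, dist_eq_norm]
    simpa using le_trans (hYle t ht) h2ξδ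
  refine ⟨hmem, ?_⟩
  -- integrable pieces
  have hA : Integrable (fun t => c.L t (pathH (p + ξ) t) ((p + ξ).2 t)) μ01 :=
    c.integrable_L hmem
  have hB : Integrable (fun t => c.L t (pathH p t) (p.2 t)) μ01 := c.integrable_L hp
  have hG1 : Integrable (fun t => ⟪c.Lq t (pathH p t) (p.2 t), pathH ξ t⟫) μ01 :=
    c.integrable_inner_Lq hp ξ
  have hG2 : Integrable (fun t => ⟪c.Lv t (pathH p t) (p.2 t), ξ.2 t⟫) μ01 :=
    c.integrable_inner_Lv hp ξ
  -- memberships in L²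
  have hwz : MemLp (fun t => ‖p.2 t‖ + ‖ξ.2 t‖) 2 μ01 :=
    (memLp_norm_Lp p.2).add (memLp_norm_Lp ξ.2)
  have h1wz : MemLp (fun t => 1 + ‖p.2 t‖ + ‖ξ.2 t‖) 2 μ01 :=
    ((memLp_const (1:ℝ)).add (memLp_norm_Lp p.2)).add (memLp_norm_Lp ξ.2)
  -- integrable bound functions
  have hsq_int : Integrable (fun t => (‖p.2 t‖ + ‖ξ.2 t‖)^2) μ01 := by
    have := integrable_mul_L2 hwz hwz
    refine this.congr ?_
    filter_upwards with t; ring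
  have hT1 : Integrable (fun t => (1 + (‖p.2 t‖ + ‖ξ.2 t‖)^2) * (2*‖ξ‖)^2) μ01 :=
    ((integrable_const (1:ℝ)).add hsq_int).mul_const _
  have hT2 : Integrable (fun t => (1 + ‖p.2 t‖ + ‖ξ.2 t‖) * ‖ξ.2 t‖ * (2*‖ξ‖)) μ01 :=
    (integrable_mul_L2 h1wz (memLp_norm_Lp ξ.2)).mul_const _
  have hT3 : Integrable (fun t => ‖ξ.2 t‖^2) μ01 := integrable_norm_sq ξ.2
  have hρ : Integrable (fun t => c.l1 * ((1 + (‖p.2 t‖ + ‖ξ.2 t‖)^2) * (2*‖ξ‖)^2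
      + (1 + ‖p.2 t‖ + ‖ξ.2 t‖) * ‖ξ.2 t‖ * (2*‖ξ‖) + ‖ξ.2 t‖^2)) μ01 :=
    ((hT1.add hT2).add hT3).const_mul _
  -- rewrite the difference as one integral
  have hsplit : action c.L (p + ξ) - action c.L p - dAct c.Lq c.Lv p ξ
      = ∫ t, (c.L t (pathH (p + ξ) t) ((p + ξ).2 t) - c.L t (pathH p t) (p.2 t)
          - (⟪c.Lq t (pathH p t) (p.2 t), pathH ξ t⟫
            + ⟪c.Lv t (pathH p t) (p.2 t), ξ.2 t⟫)) ∂μ01 := by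
    unfold action dAct
    have hAB : Integrable (fun t => c.L t (pathH (p + ξ) t) ((p + ξ).2 t)
        - c.L t (pathH p t) (p.2 t)) μ01 := hA.sub hB
    have hG12 : Integrable (fun t => ⟪c.Lq t (pathH p t) (p.2 t), pathH ξ t⟫
        + ⟪c.Lv t (pathH p t) (p.2 t), ξ.2 t⟫) μ01 := hG1.add hG2
    rw [← integral_sub hA hB, ← integral_sub hAB hG12]
  -- pointwise bound
  have hptw : ∀ᵐ t ∂μ01, ‖c.L t (pathH (p + ξ) t) ((p + ξ).2 t) - c.L t (pathH p t) (p.2 t)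
      - (⟪c.Lq t (pathH p t) (p.2 t), pathH ξ t⟫ + ⟪c.Lv t (pathH p t) (p.2 t), ξ.2 t⟫)‖
      ≤ c.l1 * ((1 + (‖p.2 t‖ + ‖ξ.2 t‖)^2) * (2*‖ξ‖)^2
        + (1 + ‖p.2 t‖ + ‖ξ.2 t‖) * ‖ξ.2 t‖ * (2*‖ξ‖) + ‖ξ.2 t‖^2) := by
    have hco : ((p + ξ).2 : ℝ → E n) =ᵐ[μ01] fun t => p.2 t + ξ.2 t := Lp.coeFn_add p.2 ξ.2
    filter_upwards [ae_mem_Icc, hco] with t ht hct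
    rw [pathH_add p ξ t ht, hct]
    have hball := (hprop t ht 0 (by simp [hδ.le])).1
    have hYt : ‖pathH ξ t‖ ≤ δ := le_trans (hYle t ht) h2ξδ
    have hkey := c.key_taylor ht hball hYt (p.2 t) (ξ.2 t)
    rw [Real.norm_eq_abs]
    have habs : |c.L t (pathH p t + pathH ξ t) (p.2 t + ξ.2 t) - c.L t (pathH p t) (p.2 t)
        - (⟪c.Lq t (pathH p t) (p.2 t), pathH ξ t⟫ + ⟪c.Lv t (pathH p t) (p.2 t), ξ.2 t⟫)|
        = |c.L t (pathH p t + pathH ξ t) (p.2 t + ξ.2 t) - c.L t (pathH p t) (p.2 t)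
        - ⟪c.Lq t (pathH p t) (p.2 t), pathH ξ t⟫ - ⟪c.Lv t (pathH p t) (p.2 t), ξ.2 t⟫| := by
      congr 1
      ring
    rw [habs]
    refine le_trans hkey ?_
    have hY0 : 0 ≤ ‖pathH ξ t‖ := norm_nonneg _
    have hYb : ‖pathH ξ t‖ ≤ 2 * ‖ξ‖ := hYle t ht
    have hz0 : 0 ≤ ‖ξ.2 t‖ := norm_nonneg _
    have hw0 : 0 ≤ ‖p.2 t‖ := norm_nonneg _
    have h1 : 0 ≤ 1 + (‖p.2 t‖ + ‖ξ.2 t‖)^2 := by positivity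
    have h2 : 0 ≤ 1 + ‖p.2 t‖ + ‖ξ.2 t‖ := by positivity
    apply mul_le_mul_of_nonneg_left _ c.hl1.le
    gcongr
  -- bound the integral of the remainder
  have hR : |action c.L (p + ξ) - action c.L p - dAct c.Lq c.Lv p ξ|
      ≤ ∫ t, c.l1 * ((1 + (‖p.2 t‖ + ‖ξ.2 t‖)^2) * (2*‖ξ‖)^2
        + (1 + ‖p.2 t‖ + ‖ξ.2 t‖) * ‖ξ.2 t‖ * (2*‖ξ‖) + ‖ξ.2 t‖^2) ∂μ01 := by
    rw [hsplit, ← Real.norm_eq_abs]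
    exact norm_integral_le_of_norm_le hρ hptw
  -- compute and bound the majorant integral
  set s1 : ℝ := ∫ t, (1 + (‖p.2 t‖ + ‖ξ.2 t‖)^2) ∂μ01 with hs1def
  set s2 : ℝ := ∫ t, (1 + ‖p.2 t‖ + ‖ξ.2 t‖) * ‖ξ.2 t‖ ∂μ01 with hs2def
  set s3 : ℝ := ∫ t, ‖ξ.2 t‖^2 ∂μ01 with hs3def
  have hIρ : ∫ t, c.l1 * ((1 + (‖p.2 t‖ + ‖ξ.2 t‖)^2) * (2*‖ξ‖)^2
      + (1 + ‖p.2 t‖ + ‖ξ.2 t‖) * ‖ξ.2 t‖ * (2*‖ξ‖) + ‖ξ.2 t‖^2) ∂μ01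
      = c.l1 * (s1 * (2*‖ξ‖)^2 + s2 * (2*‖ξ‖) + s3) := by
    have hT12 : Integrable (fun t => (1 + (‖p.2 t‖ + ‖ξ.2 t‖)^2) * (2*‖ξ‖)^2
        + (1 + ‖p.2 t‖ + ‖ξ.2 t‖) * ‖ξ.2 t‖ * (2*‖ξ‖)) μ01 := hT1.add hT2
    rw [integral_const_mul, integral_add hT12 hT3, integral_add hT1 hT2,
      integral_mul_const, integral_mul_const]
  have hNzδ : Nz ≤ δ := le_trans hNzξ (by linarith)
  have hEwz : (eLpNorm (fun t => ‖p.2 t‖ + ‖ξ.2 t‖) 2 μ01).toReal ≤ Nw + Nz := by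
    refine le_trans (toReal_eLpNorm_add (memLp_norm_Lp p.2) (memLp_norm_Lp ξ.2)) ?_
    rw [toReal_eLpNorm_coe, toReal_eLpNorm_coe]
  have hE1wz : (eLpNorm (fun t => 1 + ‖p.2 t‖ + ‖ξ.2 t‖) 2 μ01).toReal ≤ 1 + Nw + Nz := by
    refine le_trans (toReal_eLpNorm_add ((memLp_const (1:ℝ)).add (memLp_norm_Lp p.2))
      (memLp_norm_Lp ξ.2)) ?_
    rw [toReal_eLpNorm_coe]
    have := toReal_eLpNorm_add (memLp_const (1:ℝ)) (memLp_norm_Lp p.2)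
    rw [toReal_eLpNorm_const_one, toReal_eLpNorm_coe] at this
    linarith
  have hEz : (eLpNorm (fun t => ‖ξ.2 t‖) 2 μ01).toReal = Nz := toReal_eLpNorm_coe ξ.2
  have hs1 : s1 ≤ 1 + (Nw + δ)^2 := by
    have heq : s1 = 1 + ∫ t, (‖p.2 t‖ + ‖ξ.2 t‖)^2 ∂μ01 := by
      rw [hs1def, integral_add (integrable_const 1) hsq_int]
      simp
    have hsq : ∫ t, (‖p.2 t‖ + ‖ξ.2 t‖)^2 ∂μ01 ≤ (Nw + Nz) * (Nw + Nz) := by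
      have hCS := integral_mul_le_CS hwz hwz
      have heq2 : ∫ t, (‖p.2 t‖ + ‖ξ.2 t‖)^2 ∂μ01
          = ∫ t, (‖p.2 t‖ + ‖ξ.2 t‖) * (‖p.2 t‖ + ‖ξ.2 t‖) ∂μ01 := by
        apply integral_congr_ae; filter_upwards with t; ring
      rw [heq2]
      refine le_trans hCS ?_
      have h0 : (0:ℝ) ≤ (eLpNorm (fun t => ‖p.2 t‖ + ‖ξ.2 t‖) 2 μ01).toReal :=
        ENNReal.toReal_nonneg
      nlinarith [hEwz]
    have : (Nw + Nz) * (Nw + Nz) ≤ (Nw + δ)^2 := by nlinarith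
    linarith
  have hs2 : s2 ≤ (1 + Nw + δ) * ‖ξ‖ := by
    have hCS := integral_mul_le_CS h1wz (memLp_norm_Lp ξ.2)
    rw [hEz] at hCS
    have h0 : (0:ℝ) ≤ (eLpNorm (fun t => 1 + ‖p.2 t‖ + ‖ξ.2 t‖) 2 μ01).toReal :=
      ENNReal.toReal_nonneg
    have h1 : (eLpNorm (fun t => 1 + ‖p.2 t‖ + ‖ξ.2 t‖) 2 μ01).toReal * Nz
        ≤ (1 + Nw + δ) * ‖ξ‖ := by nlinarith
    exact le_trans hCS h1
  have hs3 : s3 ≤ ‖ξ‖^2 := by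
    have hCS := integral_mul_le_CS (memLp_norm_Lp ξ.2) (memLp_norm_Lp ξ.2)
    rw [hEz] at hCS
    have heq2 : s3 = ∫ t, ‖ξ.2 t‖ * ‖ξ.2 t‖ ∂μ01 := by
      rw [hs3def]; apply integral_congr_ae; filter_upwards with t; ring
    rw [heq2]
    nlinarith
  have hs10 : 0 ≤ s1 := by
    rw [hs1def]; positivity
  have hs20 : 0 ≤ s2 := by
    rw [hs2def]
    apply integral_nonneg
    intro t; positivity
  refine le_trans hR ?_
  rw [hIρ]
  have hfin : s1 * (2*‖ξ‖)^2 + s2 * (2*‖ξ‖) + s3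
      ≤ (4 * (1 + (Nw + δ)^2) + 2 * (1 + Nw + δ) + 1) * ‖ξ‖^2 := by
    have e1 : s1 * (2*‖ξ‖)^2 ≤ (1 + (Nw + δ)^2) * (4 * ‖ξ‖^2) := by nlinarith
    have e2 : s2 * (2*‖ξ‖) ≤ ((1 + Nw + δ) * ‖ξ‖) * (2*‖ξ‖) := by nlinarith
    nlinarith
  calc c.l1 * (s1 * (2*‖ξ‖)^2 + s2 * (2*‖ξ‖) + s3)
      ≤ c.l1 * ((4 * (1 + (Nw + δ)^2) + 2 * (1 + Nw + δ) + 1) * ‖ξ‖^2) :=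
        mul_le_mul_of_nonneg_left hfin c.hl1.le
    _ = C * ‖ξ‖^2 := by rw [hC]; ring

end Ctx
end
noncomputable section
open MeasureTheory Set Filter Topology ContDiff Classical Metric
open scoped RealInnerProductSpace ENNReal

variable {n : ℕ}

set_option maxHeartbeats 2000000

lemma toReal_eLpNorm_const_mul {a : ℝ} (ha : 0 ≤ a) (f : ℝ → ℝ) :
    (eLpNorm (fun t => a * f t) 2 μ01).toReal = a * (eLpNorm f 2 μ01).toReal := by
  have heq : (fun t => a * f t) = a • f := rfl
  rw [heq, eLpNorm_const_smul, ENNReal.toReal_mul]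
  congr 1
  simp [Real.norm_eq_abs, abs_of_nonneg ha]

namespace Ctx

variable (c : Ctx n)

lemma hasFDerivAt_action {p : Hsp n} (hp : p ∈ actO c.U) :
    HasFDerivAt (action c.L) (c.DD p) p := by
  obtain ⟨δ, hδ, C, hC, hkey⟩ := c.key_est hp
  rw [hasFDerivAt_iff_isLittleO_nhds_zero, Asymptotics.isLittleO_iff]
  intro ε hε
  have hr0 : 0 < min (δ/2) (ε/C) := lt_min (by linarith) (by positivity)
  filter_upwards [Metric.ball_mem_nhds (0 : Hsp n) hr0] with ξ hξ
  rw [mem_ball, dist_zero_right] at hξ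
  have h1 : ‖ξ‖ ≤ δ/2 := le_of_lt (lt_of_lt_of_le hξ (min_le_left _ _))
  have h2 : ‖ξ‖ ≤ ε/C := le_of_lt (lt_of_lt_of_le hξ (min_le_right _ _))
  obtain ⟨-, hb⟩ := hkey ξ h1
  rw [c.DD_eq_dAct hp, Real.norm_eq_abs]
  have h3 : C * ‖ξ‖ ≤ ε := by
    have := mul_le_mul_of_nonneg_left h2 hC.le
    rwa [mul_div_cancel₀ ε hC.ne'] at this
  calc |action c.L (p + ξ) - action c.L p - dAct c.Lq c.Lv p ξ| ≤ C * ‖ξ‖ ^ 2 := hb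
    _ = (C * ‖ξ‖) * ‖ξ‖ := by ring
    _ ≤ ε * ‖ξ‖ := mul_le_mul_of_nonneg_right h3 (norm_nonneg ξ)

/-- Local Lipschitz estimate for the differential. -/
lemma DD_lip {p : Hsp n} (hp : p ∈ actO c.U) :
    ∃ r > (0:ℝ), ∃ C ≥ (0:ℝ), ∀ ξ : Hsp n, ‖ξ‖ ≤ r →
      p + ξ ∈ actO c.U ∧ ‖c.DD (p + ξ) - c.DD p‖ ≤ C * ‖ξ‖ := by
  obtain ⟨δ, hδ, M, hM, hprop⟩ := c.exists_delta_M hp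
  set Nw : ℝ := ‖p.2‖ with hNw
  have hNw0 : 0 ≤ Nw := norm_nonneg _
  set C1 : ℝ := c.l1 * ((1 + (Nw + δ)^2) * 2 + (1 + Nw + δ)) with hC1
  set C2 : ℝ := c.l1 * ((1 + Nw + δ) * 2 + 1) with hC2
  have hC10 : 0 ≤ C1 := by nlinarith [c.hl1, sq_nonneg (Nw + δ)]
  have hC20 : 0 ≤ C2 := by nlinarith [c.hl1]
  refine ⟨δ/2, by linarith, 2*C1 + C2, by linarith, ?_⟩
  intro ξ hξn
  have hξ0 : 0 ≤ ‖ξ‖ := norm_nonneg ξ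
  have h2ξδ : 2 * ‖ξ‖ ≤ δ := by linarith
  set Nz : ℝ := ‖ξ.2‖ with hNz
  have hNz0 : 0 ≤ Nz := norm_nonneg _
  have hNzξ : Nz ≤ ‖ξ‖ := norm_snd_le ξ
  have hNzδ : Nz ≤ δ := by linarith
  have hYle : ∀ t ∈ Set.Icc (0:ℝ) 1, ‖pathH ξ t‖ ≤ 2 * ‖ξ‖ := fun t ht => pathH_le ξ ht
  have hmem : p + ξ ∈ actO c.U := by
    intro t ht
    rw [pathH_add p ξ t ht]
    refine (hprop t ht 0 (by simp [hδ.le])).1 ?_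
    rw [mem_closedBall, dist_eq_norm]
    simpa using le_trans (hYle t ht) h2ξδ
  refine ⟨hmem, ?_⟩
  -- L² memberships
  have hwz : MemLp (fun t => ‖p.2 t‖ + ‖ξ.2 t‖) 2 μ01 :=
    (memLp_norm_Lp p.2).add (memLp_norm_Lp ξ.2)
  have h1wz : MemLp (fun t => 1 + ‖p.2 t‖ + ‖ξ.2 t‖) 2 μ01 :=
    ((memLp_const (1:ℝ)).add (memLp_norm_Lp p.2)).add (memLp_norm_Lp ξ.2)
  have hsq_int : Integrable (fun t => (‖p.2 t‖ + ‖ξ.2 t‖)^2) μ01 := by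
    have := integrable_mul_L2 hwz hwz
    refine this.congr ?_
    filter_upwards with t; ring
  have hEwz : (eLpNorm (fun t => ‖p.2 t‖ + ‖ξ.2 t‖) 2 μ01).toReal ≤ Nw + Nz := by
    refine le_trans (toReal_eLpNorm_add (memLp_norm_Lp p.2) (memLp_norm_Lp ξ.2)) ?_
    rw [toReal_eLpNorm_coe, toReal_eLpNorm_coe]
  have hE1wz : (eLpNorm (fun t => 1 + ‖p.2 t‖ + ‖ξ.2 t‖) 2 μ01).toReal ≤ 1 + Nw + Nz := by
    refine le_trans (toReal_eLpNorm_add ((memLp_const (1:ℝ)).add (memLp_norm_Lp p.2))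
      (memLp_norm_Lp ξ.2)) ?_
    rw [toReal_eLpNorm_coe]
    have := toReal_eLpNorm_add (memLp_const (1:ℝ)) (memLp_norm_Lp p.2)
    rw [toReal_eLpNorm_const_one, toReal_eLpNorm_coe] at this
    linarith
  have hEz : (eLpNorm (fun t => ‖ξ.2 t‖) 2 μ01).toReal = Nz := toReal_eLpNorm_coe ξ.2
  -- pointwise bounds on the variations a.e.
  have hco : ((p + ξ).2 : ℝ → E n) =ᵐ[μ01] fun t => p.2 t + ξ.2 t := Lp.coeFn_add p.2 ξ.2
  have hdLq : ∀ᵐ t ∂μ01, ‖c.Lq t (pathH (p + ξ) t) ((p + ξ).2 t)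
      - c.Lq t (pathH p t) (p.2 t)‖
      ≤ c.l1 * ((1 + (‖p.2 t‖ + ‖ξ.2 t‖)^2) * (2*‖ξ‖) + (1 + ‖p.2 t‖ + ‖ξ.2 t‖) * ‖ξ.2 t‖) := by
    filter_upwards [ae_mem_Icc, hco] with t ht hct
    rw [pathH_add p ξ t ht, hct]
    have hball := (hprop t ht 0 (by simp [hδ.le])).1
    have hYt : ‖pathH ξ t‖ ≤ δ := le_trans (hYle t ht) h2ξδ
    refine le_trans (c.key_dLq ht hball hYt (p.2 t) (ξ.2 t)) ?_
    apply mul_le_mul_of_nonneg_left _ c.hl1.le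
    have := hYle t ht
    have h1 : (0:ℝ) ≤ 1 + (‖p.2 t‖ + ‖ξ.2 t‖)^2 := by positivity
    nlinarith [norm_nonneg (pathH ξ t)]
  have hdLv : ∀ᵐ t ∂μ01, ‖c.Lv t (pathH (p + ξ) t) ((p + ξ).2 t)
      - c.Lv t (pathH p t) (p.2 t)‖
      ≤ c.l1 * (2*‖ξ‖) * (1 + ‖p.2 t‖ + ‖ξ.2 t‖) + c.l1 * ‖ξ.2 t‖ := by
    filter_upwards [ae_mem_Icc, hco] with t ht hct
    rw [pathH_add p ξ t ht, hct]
    have hball := (hprop t ht 0 (by simp [hδ.le])).1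
    have hYt : ‖pathH ξ t‖ ≤ δ := le_trans (hYle t ht) h2ξδ
    refine le_trans (c.key_dLv ht hball hYt (p.2 t) (ξ.2 t)) ?_
    have hY2 := hYle t ht
    have h1 : (0:ℝ) ≤ 1 + ‖p.2 t‖ + ‖ξ.2 t‖ := by positivity
    have hmul := mul_le_mul_of_nonneg_left
      (mul_le_mul_of_nonneg_left hY2 h1) c.hl1.le
    nlinarith [hmul]
  -- integral bound for ΔLq
  have hone_sq : Integrable (fun t => 1 + (‖p.2 t‖ + ‖ξ.2 t‖)^2) μ01 :=
    (integrable_const 1).add hsq_int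
  have hq_t1 : Integrable (fun t => (1 + (‖p.2 t‖ + ‖ξ.2 t‖)^2) * (2*‖ξ‖)) μ01 :=
    hone_sq.mul_const _
  have hq_t2 : Integrable (fun t => (1 + ‖p.2 t‖ + ‖ξ.2 t‖) * ‖ξ.2 t‖) μ01 :=
    integrable_mul_L2 h1wz (memLp_norm_Lp ξ.2)
  have hgq_int : Integrable (fun t => c.l1 * ((1 + (‖p.2 t‖ + ‖ξ.2 t‖)^2) * (2*‖ξ‖)
      + (1 + ‖p.2 t‖ + ‖ξ.2 t‖) * ‖ξ.2 t‖)) μ01 := (hq_t1.add hq_t2).const_mul _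
  have hΔq_int : Integrable (fun t => c.Lq t (pathH (p + ξ) t) ((p + ξ).2 t)
      - c.Lq t (pathH p t) (p.2 t)) μ01 := (c.integrable_Lq hmem).sub (c.integrable_Lq hp)
  have hIq : ∫ t, ‖c.Lq t (pathH (p + ξ) t) ((p + ξ).2 t)
      - c.Lq t (pathH p t) (p.2 t)‖ ∂μ01 ≤ C1 * ‖ξ‖ := by
    have hmono := integral_mono_ae hΔq_int.norm hgq_int hdLq
    refine le_trans hmono ?_
    have hs1 : ∫ t, (1 + (‖p.2 t‖ + ‖ξ.2 t‖)^2) ∂μ01 ≤ 1 + (Nw + δ)^2 := by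
      have heq : ∫ t, (1 + (‖p.2 t‖ + ‖ξ.2 t‖)^2) ∂μ01
          = 1 + ∫ t, (‖p.2 t‖ + ‖ξ.2 t‖)^2 ∂μ01 := by
        rw [integral_add (integrable_const 1) hsq_int]; simp
      have hsq : ∫ t, (‖p.2 t‖ + ‖ξ.2 t‖)^2 ∂μ01 ≤ (Nw + Nz) * (Nw + Nz) := by
        have hCS := integral_mul_le_CS hwz hwz
        have heq2 : ∫ t, (‖p.2 t‖ + ‖ξ.2 t‖)^2 ∂μ01
            = ∫ t, (‖p.2 t‖ + ‖ξ.2 t‖) * (‖p.2 t‖ + ‖ξ.2 t‖) ∂μ01 := by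
          apply integral_congr_ae; filter_upwards with t; ring
        rw [heq2]
        refine le_trans hCS ?_
        have h0 : (0:ℝ) ≤ (eLpNorm (fun t => ‖p.2 t‖ + ‖ξ.2 t‖) 2 μ01).toReal :=
          ENNReal.toReal_nonneg
        nlinarith [hEwz]
      rw [heq]
      nlinarith
    have hs2 : ∫ t, (1 + ‖p.2 t‖ + ‖ξ.2 t‖) * ‖ξ.2 t‖ ∂μ01 ≤ (1 + Nw + δ) * ‖ξ‖ := by
      have hCS := integral_mul_le_CS h1wz (memLp_norm_Lp ξ.2)
      rw [hEz] at hCS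
      have h0 : (0:ℝ) ≤ (eLpNorm (fun t => 1 + ‖p.2 t‖ + ‖ξ.2 t‖) 2 μ01).toReal :=
        ENNReal.toReal_nonneg
      nlinarith
    have heval : ∫ t, c.l1 * ((1 + (‖p.2 t‖ + ‖ξ.2 t‖)^2) * (2*‖ξ‖)
        + (1 + ‖p.2 t‖ + ‖ξ.2 t‖) * ‖ξ.2 t‖) ∂μ01
        = c.l1 * ((∫ t, (1 + (‖p.2 t‖ + ‖ξ.2 t‖)^2) ∂μ01) * (2*‖ξ‖)
          + ∫ t, (1 + ‖p.2 t‖ + ‖ξ.2 t‖) * ‖ξ.2 t‖ ∂μ01) := by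
      rw [integral_const_mul, integral_add hq_t1 hq_t2, integral_mul_const]
    rw [heval, hC1, mul_assoc]
    have hs10 : (0:ℝ) ≤ ∫ t, (1 + (‖p.2 t‖ + ‖ξ.2 t‖)^2) ∂μ01 := by positivity
    have hi20 : (0:ℝ) ≤ ∫ t, (1 + ‖p.2 t‖ + ‖ξ.2 t‖) * ‖ξ.2 t‖ ∂μ01 := by
      apply integral_nonneg; intro t; positivity
    have hl10 := c.hl1
    apply mul_le_mul_of_nonneg_left _ c.hl1.le
    have hm1 := mul_le_mul_of_nonneg_right hs1 (by positivity : (0:ℝ) ≤ 2*‖ξ‖)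
    nlinarith [hm1]
  -- L² bound for ΔLv
  have hgv : MemLp (fun t => c.l1 * (2*‖ξ‖) * (1 + ‖p.2 t‖ + ‖ξ.2 t‖)
      + c.l1 * ‖ξ.2 t‖) 2 μ01 :=
    (h1wz.const_mul _).add ((memLp_norm_Lp ξ.2).const_mul _)
  have hNv : (eLpNorm (fun t => c.Lv t (pathH (p + ξ) t) ((p + ξ).2 t)
      - c.Lv t (pathH p t) (p.2 t)) 2 μ01).toReal ≤ C2 * ‖ξ‖ := by
    have hmono : eLpNorm (fun t => c.Lv t (pathH (p + ξ) t) ((p + ξ).2 t)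
        - c.Lv t (pathH p t) (p.2 t)) 2 μ01
        ≤ eLpNorm (fun t => c.l1 * (2*‖ξ‖) * (1 + ‖p.2 t‖ + ‖ξ.2 t‖)
          + c.l1 * ‖ξ.2 t‖) 2 μ01 := eLpNorm_mono_ae_real hdLv
    have h1 := ENNReal.toReal_mono hgv.2.ne hmono
    refine le_trans h1 ?_
    refine le_trans (toReal_eLpNorm_add (h1wz.const_mul _) ((memLp_norm_Lp ξ.2).const_mul _)) ?_
    rw [toReal_eLpNorm_const_mul (by have := c.hl1; positivity) _, toReal_eLpNorm_const_mul c.hl1.le _, hEz]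
    have h2 : (eLpNorm (fun t => 1 + ‖p.2 t‖ + ‖ξ.2 t‖) 2 μ01).toReal ≤ 1 + Nw + δ := by
      linarith
    rw [hC2]
    have h0 : (0:ℝ) ≤ (eLpNorm (fun t => 1 + ‖p.2 t‖ + ‖ξ.2 t‖) 2 μ01).toReal :=
      ENNReal.toReal_nonneg
    have hm1 := mul_le_mul_of_nonneg_left h2
      (mul_nonneg (mul_nonneg c.hl1.le (by positivity : (0:ℝ) ≤ 2) ) hξ0)
    have hm2 := mul_le_mul_of_nonneg_left hNzξ c.hl1.le
    nlinarith [hm1, hm2]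
  -- operator norm bound
  refine ContinuousLinearMap.opNorm_le_bound _ (by positivity) ?_
  intro η
  rw [ContinuousLinearMap.sub_apply, c.DD_eq_dAct hmem, c.DD_eq_dAct hp]
  have hint1 : Integrable (fun t => ⟪c.Lq t (pathH (p + ξ) t) ((p + ξ).2 t), pathH η t⟫
      + ⟪c.Lv t (pathH (p + ξ) t) ((p + ξ).2 t), η.2 t⟫) μ01 :=
    (c.integrable_inner_Lq hmem η).add (c.integrable_inner_Lv hmem η)
  have hint2 : Integrable (fun t => ⟪c.Lq t (pathH p t) (p.2 t), pathH η t⟫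
      + ⟪c.Lv t (pathH p t) (p.2 t), η.2 t⟫) μ01 :=
    (c.integrable_inner_Lq hp η).add (c.integrable_inner_Lv hp η)
  have hsplit : dAct c.Lq c.Lv (p + ξ) η - dAct c.Lq c.Lv p η
      = ∫ t, (⟪c.Lq t (pathH (p + ξ) t) ((p + ξ).2 t)
          - c.Lq t (pathH p t) (p.2 t), pathH η t⟫
        + ⟪c.Lv t (pathH (p + ξ) t) ((p + ξ).2 t)
          - c.Lv t (pathH p t) (p.2 t), η.2 t⟫) ∂μ01 := by
    unfold dAct
    rw [← integral_sub hint1 hint2]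
    apply integral_congr_ae
    filter_upwards with t
    rw [inner_sub_left, inner_sub_left]
    ring
  have hmaj1 : Integrable (fun t => ‖c.Lq t (pathH (p + ξ) t) ((p + ξ).2 t)
      - c.Lq t (pathH p t) (p.2 t)‖ * (2 * ‖η‖)) μ01 := hΔq_int.norm.mul_const _
  have hmaj2 : Integrable (fun t => ‖c.Lv t (pathH (p + ξ) t) ((p + ξ).2 t)
      - c.Lv t (pathH p t) (p.2 t)‖ * ‖η.2 t‖) μ01 :=
    integrable_mul_L2 (((c.memLp_Lv hmem).sub (c.memLp_Lv hp)).norm) (memLp_norm_Lp η.2)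
  have hb : ‖dAct c.Lq c.Lv (p + ξ) η - dAct c.Lq c.Lv p η‖
      ≤ ∫ t, (‖c.Lq t (pathH (p + ξ) t) ((p + ξ).2 t) - c.Lq t (pathH p t) (p.2 t)‖ * (2 * ‖η‖)
        + ‖c.Lv t (pathH (p + ξ) t) ((p + ξ).2 t) - c.Lv t (pathH p t) (p.2 t)‖ * ‖η.2 t‖)
        ∂μ01 := by
    rw [hsplit]
    refine norm_integral_le_of_norm_le (hmaj1.add hmaj2) ?_
    filter_upwards [ae_mem_Icc] with t ht
    refine le_trans (norm_add_le _ _) (add_le_add ?_ ?_)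
    · calc ‖⟪c.Lq t (pathH (p + ξ) t) ((p + ξ).2 t) - c.Lq t (pathH p t) (p.2 t), pathH η t⟫‖
          ≤ ‖c.Lq t (pathH (p + ξ) t) ((p + ξ).2 t) - c.Lq t (pathH p t) (p.2 t)‖
            * ‖pathH η t‖ := norm_inner_le_norm _ _
        _ ≤ _ := mul_le_mul_of_nonneg_left (pathH_le η ht) (norm_nonneg _)
    · exact norm_inner_le_norm _ _
  have hCSv : ∫ t, ‖c.Lv t (pathH (p + ξ) t) ((p + ξ).2 t)
      - c.Lv t (pathH p t) (p.2 t)‖ * ‖η.2 t‖ ∂μ01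
      ≤ (C2 * ‖ξ‖) * ‖η.2‖ := by
    have hCS := integral_mul_le_CS (((c.memLp_Lv hmem).sub (c.memLp_Lv hp)).norm)
      (memLp_norm_Lp η.2)
    rw [eLpNorm_norm, toReal_eLpNorm_coe] at hCS
    refine le_trans hCS ?_
    exact mul_le_mul_of_nonneg_right hNv (norm_nonneg _)
  have hIη : ∫ t, ‖c.Lq t (pathH (p + ξ) t) ((p + ξ).2 t)
      - c.Lq t (pathH p t) (p.2 t)‖ * (2 * ‖η‖) ∂μ01
      ≤ (C1 * ‖ξ‖) * (2 * ‖η‖) := by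
    rw [integral_mul_const]
    exact mul_le_mul_of_nonneg_right hIq (by positivity)
  have hηs : ‖η.2‖ ≤ ‖η‖ := norm_snd_le η
  have hη0 : (0:ℝ) ≤ ‖η‖ := norm_nonneg η
  calc ‖dAct c.Lq c.Lv (p + ξ) η - dAct c.Lq c.Lv p η‖
      ≤ ∫ t, (‖c.Lq t (pathH (p + ξ) t) ((p + ξ).2 t) - c.Lq t (pathH p t) (p.2 t)‖ * (2 * ‖η‖)
        + ‖c.Lv t (pathH (p + ξ) t) ((p + ξ).2 t) - c.Lv t (pathH p t) (p.2 t)‖ * ‖η.2 t‖)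
        ∂μ01 := hb
    _ = (∫ t, ‖c.Lq t (pathH (p + ξ) t) ((p + ξ).2 t)
          - c.Lq t (pathH p t) (p.2 t)‖ * (2 * ‖η‖) ∂μ01)
        + ∫ t, ‖c.Lv t (pathH (p + ξ) t) ((p + ξ).2 t)
          - c.Lv t (pathH p t) (p.2 t)‖ * ‖η.2 t‖ ∂μ01 := integral_add hmaj1 hmaj2
    _ ≤ (C1 * ‖ξ‖) * (2 * ‖η‖) + (C2 * ‖ξ‖) * ‖η.2‖ := add_le_add hIη hCSv
    _ ≤ (2*C1 + C2) * ‖ξ‖ * ‖η‖ := by nlinarith [mul_le_mul_of_nonneg_left hηs (mul_nonneg (mul_nonneg hC20 hξ0) (by norm_num : (0:ℝ) ≤ 1)), mul_le_mul_of_nonneg_left hηs (mul_nonneg hC20 hξ0)]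

lemma continuousOn_DD : ContinuousOn c.DD (actO c.U) := by
  intro p hp
  obtain ⟨r, hr, C, hC, hlip⟩ := c.DD_lip hp
  refine ContinuousAt.continuousWithinAt ?_
  rw [Metric.continuousAt_iff]
  intro ε hε
  refine ⟨min r (ε/(C+1)), lt_min hr (by positivity), ?_⟩
  intro p' hd
  have hdist : ‖p' - p‖ < min r (ε/(C+1)) := by rwa [← dist_eq_norm]
  have hξr : ‖p' - p‖ ≤ r := le_of_lt (lt_of_lt_of_le hdist (min_le_left _ _))
  have hξε : ‖p' - p‖ ≤ ε/(C+1) := le_of_lt (lt_of_lt_of_le hdist (min_le_right _ _))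
  obtain ⟨-, hb⟩ := hlip (p' - p) hξr
  rw [add_sub_cancel] at hb
  rw [dist_eq_norm]
  calc ‖c.DD p' - c.DD p‖ ≤ C * ‖p' - p‖ := hb
    _ ≤ C * (ε/(C+1)) := mul_le_mul_of_nonneg_left hξε hC
    _ < ε := by
        rw [mul_div_assoc']
        rw [div_lt_iff₀ (by linarith)]
        nlinarith

end Ctx
end
open MeasureTheory Set Filter Topology ContDiff
open scoped RealInnerProductSpace

/-- The action functional `S_L` is well defined and continuously Fréchet
differentiable on `𝒪`, with Fréchet differential at `γ ∈ 𝒪` given by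
`ξ ↦ ∫_0^1 ( ∂L/∂q(t,γ,γ')·ξ + ∂L/∂v(t,γ,γ')·ξ' ) dt`. -/
theorem action_wellDefined_and_C1
    {n : ℕ} (U : Set (E n)) (hU : IsOpen U)
    (L : ℝ → E n → E n → ℝ)
    (Lq Lv : ℝ → E n → E n → E n)
    (Lvv Lqv Lvq Lqq : ℝ → E n → E n → (E n →L[ℝ] E n))
    (hL : ContDiffOn ℝ ∞ (fun z : ℝ × E n × E n => L z.1 z.2.1 z.2.2)
      (Set.univ ×ˢ U ×ˢ Set.univ))
    (hLq : ∀ (t : ℝ), ∀ q ∈ U, ∀ v : E n, HasGradientAt (fun q' => L t q' v) (Lq t q v) q)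
    (hLv : ∀ (t : ℝ), ∀ q ∈ U, ∀ v : E n, HasGradientAt (fun v' => L t q v') (Lv t q v) v)
    (hLvv : ∀ (t : ℝ), ∀ q ∈ U, ∀ v : E n, HasFDerivAt (fun v' => Lv t q v') (Lvv t q v) v)
    (hLqv : ∀ (t : ℝ), ∀ q ∈ U, ∀ v : E n, HasFDerivAt (fun q' => Lv t q' v) (Lqv t q v) q)
    (hLvq : ∀ (t : ℝ), ∀ q ∈ U, ∀ v : E n, HasFDerivAt (fun v' => Lq t q v') (Lvq t q v) v)
    (hLqq : ∀ (t : ℝ), ∀ q ∈ U, ∀ v : E n, HasFDerivAt (fun q' => Lq t q' v) (Lqq t q v) q)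
    (ℓ₁ : ℝ) (hℓ₁ : 0 < ℓ₁)
    (hL1 : ∀ t ∈ Set.Icc (0:ℝ) 1, ∀ q ∈ U, ∀ v : E n,
      ‖Lvv t q v‖ ≤ ℓ₁ ∧ ‖Lqv t q v‖ ≤ ℓ₁ * (1 + ‖v‖) ∧ ‖Lvq t q v‖ ≤ ℓ₁ * (1 + ‖v‖)
        ∧ ‖Lqq t q v‖ ≤ ℓ₁ * (1 + ‖v‖ ^ 2))
 :
    (∀ p ∈ actO U, Integrable (fun t => L t (pathH p t) (p.2 t)) μ01) ∧
    ∃ D : Hsp n → (Hsp n →L[ℝ] ℝ),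
      (∀ p ∈ actO U, HasFDerivAt (action L) (D p) p) ∧
      ContinuousOn D (actO U) ∧
      (∀ p ∈ actO U, ∀ ξ : Hsp n, D p ξ = dAct Lq Lv p ξ) := by
  let c : Ctx n :=
    ⟨U, hU, L, Lq, Lv, Lvv, Lqv, Lvq, Lqq, hL, hLq, hLv, hLvv, hLqv, hLvq, hLqq, ℓ₁, hℓ₁, hL1⟩
  refine ⟨fun p hp => c.integrable_L hp, c.DD, fun p hp => c.hasFDerivAt_action hp,
    c.continuousOn_DD, fun p hp ξ => c.DD_eq_dAct hp ξ⟩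
end

section
/- If (x_h,w_h) converges to (x,w) in H, all the paths γ_h := γ_{x_h,w_h} and γ := γ_{x,w} have image contained in U, then the Nemitsky operators converge: ∂L/∂q(·, γ_h(·), w_h(·)) → ∂L/∂q(·, γ(·), w(·)) in L¹([0,1],ℝ^n) and ∂L/∂v(·, γ_h(·), w_h(·)) → ∂L/∂v(·, γ(·), w(·)) in L²([0,1],ℝ^n). -/
open MeasureTheory Set Filter Topology ContDiff
open scoped RealInnerProductSpace

noncomputable section


instance aux_prob : IsProbabilityMeasure (μ01) :=
  ⟨by rw [Measure.restrict_apply_univ]; simp [Real.volume_Icc]⟩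

lemma aux_integrable_sq {n : ℕ} (f : Lp (E n) 2 μ01) :
    Integrable (fun t => ‖f t‖^2) μ01 :=
  (L2.integrable_inner (𝕜 := ℝ) f f).congr
    (Eventually.of_forall fun _ => real_inner_self_eq_norm_sq _)

lemma aux_integral_sq {n : ℕ} (f : Lp (E n) 2 μ01) :
    ∫ t, ‖f t‖^2 ∂μ01 = ‖f‖^2 := by
  have h := (L2.inner_def (𝕜 := ℝ) f f).symm
  rw [real_inner_self_eq_norm_sq] at h
  rw [← h]
  exact integral_congr_ae (Eventually.of_forall fun x => (real_inner_self_eq_norm_sq _).symm)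

lemma aux_young' (x y δ : ℝ) (hδ : 0 < δ) : x*y ≤ δ*x^2/2 + y^2/(2*δ) := by
  have h : x*y - (δ*x^2/2 + y^2/(2*δ)) = -((δ*x - y)^2)/(2*δ) := by
    field_simp; ring
  rw [neg_div] at h
  have h2 : (0:ℝ) ≤ (δ*x - y)^2/(2*δ) := by positivity
  linarith

lemma aux_int_norm_le {n : ℕ} (f : Lp (E n) 2 μ01) {δ : ℝ} (hδ : 0 < δ) :
    ∫ t, ‖f t‖ ∂μ01 ≤ (δ + ‖f‖^2/δ)/2 := by
  have hg : Integrable (fun t => (δ + ‖f t‖^2/δ)/2) μ01 := by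
    apply Integrable.div_const
    exact (integrable_const δ).add ((aux_integrable_sq f).div_const δ)
  have hmono : ∫ t, ‖f t‖ ∂μ01 ≤ ∫ t, (δ + ‖f t‖^2/δ)/2 ∂μ01 := by
    refine integral_mono_of_nonneg (Eventually.of_forall fun t => norm_nonneg _) hg
      (Eventually.of_forall fun t => ?_)
    have h := aux_young' 1 (‖f t‖) δ hδ
    have e : ‖f t‖^2/(2*δ) = (‖f t‖^2/δ)/2 := by ring
    rw [e] at h
    nlinarith
  refine hmono.trans_eq ?_
  rw [integral_div]
  congr 1
  rw [integral_add (integrable_const δ) ((aux_integrable_sq f).div_const δ),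
    integral_const, integral_div, aux_integral_sq]
  simp

lemma aux_path_sub {n : ℕ} (a b : Hsp n) (t : ℝ) :
    ‖pathH a t - pathH b t‖ ≤ ‖a.1 - b.1‖ + ∫ s, ‖(a.2 - b.2 : Lp (E n) 2 μ01) s‖ ∂μ01 := by
  set u : Lp (E n) 2 μ01 := a.2 - b.2 with hu
  have hint : ∀ r : Lp (E n) 2 μ01, Integrable (r : ℝ → E n) (μ01.restrict (Set.Ioc (0:ℝ) t)) :=
    fun r => ((Lp.memLp r).integrable (by norm_num)).restrict
  have h1 : ((u : Lp (E n) 2 μ01) : ℝ → E n)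
      =ᵐ[μ01.restrict (Set.Ioc (0:ℝ) t)] fun s => a.2 s - b.2 s :=
    ae_restrict_of_ae (Lp.coeFn_sub a.2 b.2)
  have h2 : ∫ s in Set.Ioc (0:ℝ) t, u s ∂μ01
      = (∫ s in Set.Ioc (0:ℝ) t, a.2 s ∂μ01) - ∫ s in Set.Ioc (0:ℝ) t, b.2 s ∂μ01 := by
    rw [integral_congr_ae h1]
    exact integral_sub (hint a.2) (hint b.2)
  have h3 : pathH a t - pathH b t = (a.1 - b.1) + ∫ s in Set.Ioc (0:ℝ) t, u s ∂μ01 := by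
    simp only [pathH, h2]; abel
  rw [h3]
  refine (norm_add_le _ _).trans (add_le_add_right ?_ _)
  refine (norm_integral_le_integral_norm _).trans ?_
  exact setIntegral_le_integral ((Lp.memLp u).integrable (by norm_num)).norm
    (Eventually.of_forall fun s => norm_nonneg _)

lemma aux_path_cont {n : ℕ} (p : Hsp n) : ContinuousOn (pathH p) (Set.Icc (0:ℝ) 1) := by
  have hg : Integrable (p.2 : ℝ → E n) μ01 := (Lp.memLp p.2).integrable (by norm_num)
  have hF : Continuous fun t => p.1 + ∫ s in (0:ℝ)..t, p.2 s ∂μ01 :=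
    continuous_const.add (hg.continuous_primitive 0)
  refine hF.continuousOn.congr fun t ht => ?_
  simp only [pathH]
  rw [intervalIntegral.integral_of_le ht.1]

lemma aux_q_est (ℓ₁ e δ a b V E' : ℝ) (hℓ : 0 < ℓ₁) (he : 0 ≤ e) (hδ : 0 < δ)
    (ha : 0 ≤ a) (hb : 0 ≤ b) (hV0 : 0 ≤ V) (hV : V ≤ a + b) (hE0 : 0 ≤ E') (hE : E' ≤ e) :
    ℓ₁*(1+V^2)*E' + ℓ₁*(1+(V+a+1))*b
      ≤ 12*ℓ₁*(e+δ) + 12*ℓ₁*(e+δ)*a^2 + (2*ℓ₁*(e+δ) + ℓ₁/(2*δ))*b^2 := by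
  have hV2 : V^2 ≤ (a+b)^2 := by nlinarith
  have h1 : ℓ₁*(1+V^2)*E' ≤ ℓ₁*(1+(a+b)^2)*e :=
    mul_le_mul (by nlinarith) hE hE0 (by positivity)
  have h2 : (2+2*a+b)*b ≤ δ*(2+2*a+b)^2/2 + b^2/(2*δ) := aux_young' _ _ _ hδ
  have h3 : ℓ₁*(1+(V+a+1))*b ≤ ℓ₁*((2+2*a+b)*b) := by
    have := mul_le_mul_of_nonneg_right (by linarith : 2+V+a ≤ 2+2*a+b) hb
    nlinarith
  have h4 : ℓ₁/(2*δ)*b^2 = ℓ₁*(b^2/(2*δ)) := by ring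
  have h5 : ℓ₁*(δ*(2+2*a+b)^2/2) ≤ ℓ₁*(δ*(12+12*a^2+3*b^2)/2) := by
    nlinarith [sq_nonneg (2-2*a), sq_nonneg (2-b), sq_nonneg (2*a-b), mul_pos hℓ hδ]
  nlinarith [mul_nonneg (mul_nonneg hℓ.le he) (sq_nonneg (a-b)),
    mul_nonneg (mul_nonneg hℓ.le hδ.le) (sq_nonneg a),
    mul_nonneg (mul_nonneg hℓ.le hδ.le) (sq_nonneg b),
    mul_nonneg (mul_nonneg hℓ.le he) (sq_nonneg a),
    mul_nonneg (mul_nonneg hℓ.le he) (sq_nonneg b),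
    mul_nonneg hℓ.le he, mul_nonneg hℓ.le hδ.le]

lemma aux_v_est (ℓ₁ e a b V E' : ℝ) (hℓ : 0 < ℓ₁) (he : 0 ≤ e)
    (ha : 0 ≤ a) (hb : 0 ≤ b) (hV0 : 0 ≤ V) (hV : V ≤ a + b) (hE0 : 0 ≤ E') (hE : E' ≤ e) :
    (ℓ₁*(1+V)*E' + ℓ₁*b)^2
      ≤ 6*ℓ₁^2*e^2 + 6*ℓ₁^2*e^2*a^2 + (6*ℓ₁^2*e^2 + 2*ℓ₁^2)*b^2 := by
  have h1 : ℓ₁*(1+V)*E' ≤ ℓ₁*(1+a+b)*e :=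
    mul_le_mul (by nlinarith) hE hE0 (by positivity)
  have h0 : 0 ≤ ℓ₁*(1+V)*E' := by positivity
  have h2 : (ℓ₁*(1+V)*E' + ℓ₁*b)^2 ≤ 2*(ℓ₁*(1+a+b)*e)^2 + 2*(ℓ₁*b)^2 := by
    nlinarith [sq_nonneg (ℓ₁*(1+V)*E' - ℓ₁*b), sq_nonneg (ℓ₁*(1+a+b)*e - ℓ₁*b),
      mul_nonneg (mul_nonneg hℓ.le (by linarith : (0:ℝ) ≤ 1+a+b)) he]
  have h3 : (ℓ₁*(1+a+b)*e)^2 ≤ ℓ₁^2*e^2*(3*(1+a^2+b^2)) := by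
    nlinarith [sq_nonneg (1-a), sq_nonneg (1-b), sq_nonneg (a-b), sq_nonneg (ℓ₁*e),
      mul_nonneg (sq_nonneg (ℓ₁*e)) (sq_nonneg (1-a)), mul_nonneg (sq_nonneg (ℓ₁*e)) (sq_nonneg (1-b)),
      mul_nonneg (sq_nonneg (ℓ₁*e)) (sq_nonneg (a-b))]
  nlinarith [sq_nonneg ℓ₁, sq_nonneg e, sq_nonneg b]

/-! ### sequences of scalars -/

def dSeq {n : ℕ} (ps : ℕ → Hsp n) (p : Hsp n) (h : ℕ) : ℝ := ‖ps h - p‖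

def delSeq {n : ℕ} (ps : ℕ → Hsp n) (p : Hsp n) (h : ℕ) : ℝ := dSeq ps p h + 1/(h+1)

def eSeq {n : ℕ} (ps : ℕ → Hsp n) (p : Hsp n) (h : ℕ) : ℝ :=
  dSeq ps p h + (delSeq ps p h + dSeq ps p h)/2

variable {n : ℕ} {ps : ℕ → Hsp n} {p : Hsp n}

lemma dSeq_nonneg (h : ℕ) : 0 ≤ dSeq ps p h := norm_nonneg _

lemma delSeq_pos (h : ℕ) : 0 < delSeq ps p h := by
  have h1 : (0:ℝ) < 1/(h+1) := by positivity
  have := dSeq_nonneg (ps := ps) (p := p) h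
  unfold delSeq; linarith

lemma dSeq_le_delSeq (h : ℕ) : dSeq ps p h ≤ delSeq ps p h := by
  have h1 : (0:ℝ) < 1/(h+1 : ℝ) := by positivity
  unfold delSeq; linarith

lemma eSeq_nonneg (h : ℕ) : 0 ≤ eSeq ps p h := by
  have := dSeq_nonneg (ps := ps) (p := p) h
  have := delSeq_pos (ps := ps) (p := p) h
  unfold eSeq; linarith

lemma uSeq_norm_le (h : ℕ) : ‖(ps h).2 - p.2‖ ≤ dSeq ps p h := norm_snd_le (ps h - p)

lemma path_bound (h : ℕ) (t : ℝ) :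
    ‖pathH (ps h) t - pathH p t‖ ≤ eSeq ps p h := by
  have h1 := aux_path_sub (ps h) p t
  have h2 := aux_int_norm_le ((ps h).2 - p.2) (delSeq_pos (ps := ps) (p := p) h)
  have h3 : ‖(ps h).2 - p.2‖^2 ≤ dSeq ps p h * delSeq ps p h := by
    have hu := uSeq_norm_le (ps := ps) (p := p) h
    nlinarith [dSeq_nonneg (ps := ps) (p := p) h, dSeq_le_delSeq (ps := ps) (p := p) h,
      norm_nonneg ((ps h).2 - p.2)]
  have h4 : ‖(ps h).2 - p.2‖^2/(delSeq ps p h) ≤ dSeq ps p h := by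
    rw [div_le_iff₀ (delSeq_pos (ps := ps) (p := p) h)]
    linarith [h3]
  have h5 : ‖(ps h).1 - p.1‖ ≤ dSeq ps p h := norm_fst_le (ps h - p)
  unfold eSeq
  linarith


end

set_option maxHeartbeats 1000000 in
/-- Convergence of the Nemitsky operators: if `(x_h,w_h) → (x,w)` in `H`, with
all paths in `U`, then `∂L/∂q(·,γ_h,w_h) → ∂L/∂q(·,γ,w)` in `L¹` and
`∂L/∂v(·,γ_h,w_h) → ∂L/∂v(·,γ,w)` in `L²`. -/
theorem nemitsky_convergence
    {n : ℕ} (U : Set (E n)) (hU : IsOpen U)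
    (L : ℝ → E n → E n → ℝ)
    (Lq Lv : ℝ → E n → E n → E n)
    (Lvv Lqv Lvq Lqq : ℝ → E n → E n → (E n →L[ℝ] E n))
    (hL : ContDiffOn ℝ ∞ (fun z : ℝ × E n × E n => L z.1 z.2.1 z.2.2)
      (Set.univ ×ˢ U ×ˢ Set.univ))
    (hLq : ∀ (t : ℝ), ∀ q ∈ U, ∀ v : E n, HasGradientAt (fun q' => L t q' v) (Lq t q v) q)
    (hLv : ∀ (t : ℝ), ∀ q ∈ U, ∀ v : E n, HasGradientAt (fun v' => L t q v') (Lv t q v) v)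
    (hLvv : ∀ (t : ℝ), ∀ q ∈ U, ∀ v : E n, HasFDerivAt (fun v' => Lv t q v') (Lvv t q v) v)
    (hLqv : ∀ (t : ℝ), ∀ q ∈ U, ∀ v : E n, HasFDerivAt (fun q' => Lv t q' v) (Lqv t q v) q)
    (hLvq : ∀ (t : ℝ), ∀ q ∈ U, ∀ v : E n, HasFDerivAt (fun v' => Lq t q v') (Lvq t q v) v)
    (hLqq : ∀ (t : ℝ), ∀ q ∈ U, ∀ v : E n, HasFDerivAt (fun q' => Lq t q' v) (Lqq t q v) q)
    (ℓ₁ : ℝ) (hℓ₁ : 0 < ℓ₁)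
    (hL1 : ∀ t ∈ Set.Icc (0:ℝ) 1, ∀ q ∈ U, ∀ v : E n,
      ‖Lvv t q v‖ ≤ ℓ₁ ∧ ‖Lqv t q v‖ ≤ ℓ₁ * (1 + ‖v‖) ∧ ‖Lvq t q v‖ ≤ ℓ₁ * (1 + ‖v‖)
        ∧ ‖Lqq t q v‖ ≤ ℓ₁ * (1 + ‖v‖ ^ 2))
    (ps : ℕ → Hsp n) (p : Hsp n)
    (hps : ∀ h, ps h ∈ actO U) (hp : p ∈ actO U)
    (hconv : Tendsto ps atTop (𝓝 p)) :
    Tendsto (fun h => ∫ t, ‖Lq t (pathH (ps h) t) ((ps h).2 t) - Lq t (pathH p t) (p.2 t)‖ ∂μ01)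
      atTop (𝓝 0) ∧
    Tendsto
      (fun h => ∫ t, ‖Lv t (pathH (ps h) t) ((ps h).2 t) - Lv t (pathH p t) (p.2 t)‖ ^ 2 ∂μ01)
      atTop (𝓝 0) := by
  -- compactness of the path image and the thickening radius
  have hKc : IsCompact (pathH p '' Set.Icc (0:ℝ) 1) :=
    isCompact_Icc.image_of_continuousOn (aux_path_cont p)
  have hKU : pathH p '' Set.Icc (0:ℝ) 1 ⊆ U := by
    rintro _ ⟨t, ht, rfl⟩; exact hp t ht
  obtain ⟨ε, hε, hthick⟩ := hKc.exists_thickening_subset_open hU hKU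
  have hball : ∀ t ∈ Set.Icc (0:ℝ) 1, Metric.ball (pathH p t) ε ⊆ U := by
    intro t ht z hz
    exact hthick (Metric.mem_thickening_iff.mpr
      ⟨pathH p t, ⟨t, ht, rfl⟩, by rwa [Metric.mem_ball] at hz⟩)
  -- limits of the scalar sequences
  have hdt : Tendsto (dSeq ps p) atTop (𝓝 0) := tendsto_iff_norm_sub_tendsto_zero.mp hconv
  have hδt : Tendsto (delSeq ps p) atTop (𝓝 0) := by
    have h1 : Tendsto (fun h : ℕ => 1/((h:ℝ)+1)) atTop (𝓝 0) :=
      tendsto_one_div_add_atTop_nhds_zero_nat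
    have h2 := hdt.add h1
    rw [add_zero] at h2
    exact h2.congr fun h => by simp [delSeq]
  have het : Tendsto (eSeq ps p) atTop (𝓝 0) := by
    have h2 := hdt.add ((hδt.add hdt).div_const 2)
    norm_num at h2
    exact h2.congr fun h => by simp [eSeq]
  have hev : ∀ᶠ h in atTop, eSeq ps p h < ε := het.eventually_lt_const hε
  have hA : ∀ t ∈ Set.Icc (0:ℝ) 1, ∀ (z : E n), z ∈ Metric.ball (pathH p t) ε → z ∈ U :=
    fun t ht z hz => hball t ht hz
  -- the common pointwise data, for a fixed index `h` with `eSeq ps p h < ε`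
  -- Part 1 : the Lq (L¹) convergence
  constructor
  · apply squeeze_zero' (Eventually.of_forall fun h =>
      integral_nonneg fun t => norm_nonneg _)
      (g := fun h => 12*ℓ₁*(eSeq ps p h + delSeq ps p h)*(1+‖p.2‖^2)
        + 2*ℓ₁*(eSeq ps p h + delSeq ps p h)*(dSeq ps p h)^2 + ℓ₁/2*(dSeq ps p h))
    · filter_upwards [hev] with h hh
      set e := eSeq ps p h with he_def
      set δ := delSeq ps p h with hδ_def
      set d := dSeq ps p h with hd_def
      have hδ0 : 0 < δ := delSeq_pos h
      have he0 : 0 ≤ e := eSeq_nonneg h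
      have hd0 : 0 ≤ d := dSeq_nonneg h
      have hdδ : d ≤ δ := dSeq_le_delSeq h
      set C0 : ℝ := 12*ℓ₁*(e+δ) with hC0
      set C1 : ℝ := 2*ℓ₁*(e+δ) + ℓ₁/(2*δ) with hC1
      have hi1 : Integrable (fun t => C0*‖p.2 t‖^2) μ01 := (aux_integrable_sq p.2).const_mul C0
      have hi2 : Integrable (fun t => C1*‖((ps h).2 - p.2 : Lp (E n) 2 μ01) t‖^2) μ01 :=
        (aux_integrable_sq ((ps h).2 - p.2)).const_mul C1
      have hi01 : Integrable (fun t => C0 + C0*‖p.2 t‖^2) μ01 := (integrable_const C0).add hi1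
      have hgint : Integrable
          (fun t => C0 + C0*‖p.2 t‖^2 + C1*‖((ps h).2 - p.2 : Lp (E n) 2 μ01) t‖^2) μ01 :=
        hi01.add hi2
      have hIle : ∫ t, ‖Lq t (pathH (ps h) t) ((ps h).2 t) - Lq t (pathH p t) (p.2 t)‖ ∂μ01
          ≤ C0 + C0*‖p.2‖^2 + C1*‖((ps h).2 - p.2 : Lp (E n) 2 μ01)‖^2 := by
        have hInt : ∫ t, (C0 + C0*‖p.2 t‖^2
              + C1*‖((ps h).2 - p.2 : Lp (E n) 2 μ01) t‖^2) ∂μ01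
            = C0 + C0*‖p.2‖^2 + C1*‖((ps h).2 - p.2 : Lp (E n) 2 μ01)‖^2 := by
          rw [integral_add hi01 hi2, integral_add (integrable_const C0) hi1,
            integral_const, integral_const_mul, integral_const_mul,
            aux_integral_sq, aux_integral_sq]
          simp
        rw [← hInt]
        refine integral_mono_of_nonneg (Eventually.of_forall fun t => norm_nonneg _) hgint ?_
        filter_upwards [ae_restrict_mem measurableSet_Icc, Lp.coeFn_sub (ps h).2 p.2]
          with t ht hsub
        have hq2U : pathH p t ∈ U := hp t ht
        have hE' : ‖pathH (ps h) t - pathH p t‖ ≤ e := path_bound h t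
        have hq1b : pathH (ps h) t ∈ Metric.ball (pathH p t) ε := by
          rw [Metric.mem_ball, dist_eq_norm]; exact lt_of_le_of_lt hE' hh
        have hq2b : pathH p t ∈ Metric.ball (pathH p t) ε := Metric.mem_ball_self hε
        have hAq : ‖Lq t (pathH (ps h) t) ((ps h).2 t) - Lq t (pathH p t) ((ps h).2 t)‖
            ≤ ℓ₁*(1+‖(ps h).2 t‖^2) * ‖pathH (ps h) t - pathH p t‖ := by
          refine Convex.norm_image_sub_le_of_norm_hasFDerivWithin_le
            (fun z hz => (hLqq t z (hA t ht z hz) ((ps h).2 t)).hasFDerivWithinAt)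
            (fun z hz => (hL1 t ht z (hA t ht z hz) ((ps h).2 t)).2.2.2)
            (convex_ball _ _) hq2b hq1b
        have hBq : ‖Lq t (pathH p t) ((ps h).2 t) - Lq t (pathH p t) (p.2 t)‖
            ≤ ℓ₁*(1+(‖(ps h).2 t‖+‖p.2 t‖+1)) * ‖(ps h).2 t - p.2 t‖ := by
          refine Convex.norm_image_sub_le_of_norm_hasFDerivWithin_le
            (f' := fun z => Lvq t (pathH p t) z)
            (fun z _ => (hLvq t (pathH p t) hq2U z).hasFDerivWithinAt)
            (fun z hz => ?_) (convex_ball _ _)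
            (x := p.2 t) (y := (ps h).2 t)
            (mem_ball_zero_iff.mpr (by linarith [norm_nonneg ((ps h).2 t)] :
              ‖p.2 t‖ < ‖(ps h).2 t‖+‖p.2 t‖+1))
            (mem_ball_zero_iff.mpr (by linarith [norm_nonneg (p.2 t)] :
              ‖(ps h).2 t‖ < ‖(ps h).2 t‖+‖p.2 t‖+1))
          · have h1 := (hL1 t ht (pathH p t) hq2U z).2.2.1
            have hz' : ‖z‖ ≤ ‖(ps h).2 t‖+‖p.2 t‖+1 := le_of_lt (mem_ball_zero_iff.mp hz)
            nlinarith
        have hsub' : ((ps h).2 - p.2 : Lp (E n) 2 μ01) t = (ps h).2 t - p.2 t := by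
          simpa using hsub
        have hb' : ‖(ps h).2 t - p.2 t‖ = ‖((ps h).2 - p.2 : Lp (E n) 2 μ01) t‖ := by
          rw [hsub']
        have hVle : ‖(ps h).2 t‖ ≤ ‖p.2 t‖ + ‖((ps h).2 - p.2 : Lp (E n) 2 μ01) t‖ := by
          rw [← hb']
          calc ‖(ps h).2 t‖ = ‖p.2 t + ((ps h).2 t - p.2 t)‖ := by congr 1; abel
          _ ≤ ‖p.2 t‖ + ‖(ps h).2 t - p.2 t‖ := norm_add_le _ _
        have htri : ‖Lq t (pathH (ps h) t) ((ps h).2 t) - Lq t (pathH p t) (p.2 t)‖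
            ≤ ‖Lq t (pathH (ps h) t) ((ps h).2 t) - Lq t (pathH p t) ((ps h).2 t)‖
              + ‖Lq t (pathH p t) ((ps h).2 t) - Lq t (pathH p t) (p.2 t)‖ :=
          norm_sub_le_norm_sub_add_norm_sub _ _ _
        have hkey := aux_q_est ℓ₁ e δ (‖p.2 t‖) (‖((ps h).2 - p.2 : Lp (E n) 2 μ01) t‖)
          (‖(ps h).2 t‖) (‖pathH (ps h) t - pathH p t‖) hℓ₁ he0 hδ0
          (norm_nonneg _) (norm_nonneg _) (norm_nonneg _) hVle (norm_nonneg _) hE'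
        rw [hb'] at hBq
        have hAq' : ‖Lq t (pathH (ps h) t) ((ps h).2 t) - Lq t (pathH p t) ((ps h).2 t)‖
            ≤ ℓ₁*(1+‖(ps h).2 t‖^2) * e := by
          refine hAq.trans ?_
          exact mul_le_mul_of_nonneg_left hE' (by positivity)
        have hBq' : ‖Lq t (pathH p t) ((ps h).2 t) - Lq t (pathH p t) (p.2 t)‖
            ≤ ℓ₁*(1+(‖(ps h).2 t‖+‖p.2 t‖+1)) * ‖((ps h).2 - p.2 : Lp (E n) 2 μ01) t‖ := hBq
        rw [hC0, hC1]
        calc ‖Lq t (pathH (ps h) t) ((ps h).2 t) - Lq t (pathH p t) (p.2 t)‖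
            ≤ ℓ₁*(1+‖(ps h).2 t‖^2) * ‖pathH (ps h) t - pathH p t‖
              + ℓ₁*(1+(‖(ps h).2 t‖+‖p.2 t‖+1)) * ‖((ps h).2 - p.2 : Lp (E n) 2 μ01) t‖ := by
              linarith
          _ ≤ 12*ℓ₁*(e+δ) + 12*ℓ₁*(e+δ)*‖p.2 t‖^2
              + (2*ℓ₁*(e+δ) + ℓ₁/(2*δ))*‖((ps h).2 - p.2 : Lp (E n) 2 μ01) t‖^2 := hkey
      -- now bound the Lp-norm term
      refine hIle.trans ?_
      have hu2 : ‖((ps h).2 - p.2 : Lp (E n) 2 μ01)‖^2 ≤ d^2 := by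
        have := uSeq_norm_le (ps := ps) (p := p) h
        nlinarith [norm_nonneg ((ps h).2 - p.2)]
      have hdiv : ℓ₁/(2*δ)*d^2 ≤ ℓ₁/2*d := by
        rw [div_mul_eq_mul_div, div_le_iff₀ (by positivity)]
        nlinarith [mul_le_mul_of_nonneg_left hdδ (mul_nonneg hℓ₁.le hd0)]
      have hC10 : 0 ≤ C1 := by rw [hC1]; positivity
      have h2a : C1*‖((ps h).2 - p.2 : Lp (E n) 2 μ01)‖^2 ≤ C1*d^2 :=
        mul_le_mul_of_nonneg_left hu2 hC10
      rw [hC0, hC1] at *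
      nlinarith [sq_nonneg (‖p.2‖), mul_nonneg (mul_nonneg hℓ₁.le (by linarith : (0:ℝ) ≤ e+δ)) (sq_nonneg (‖p.2‖))]
    · have h1 : Tendsto (fun h => eSeq ps p h + delSeq ps p h) atTop (𝓝 0) := by
        simpa using het.add hδt
      have h2 : Tendsto (fun h => (dSeq ps p h)^2) atTop (𝓝 0) := by
        have := hdt.mul hdt
        simpa [pow_two] using this
      have := ((tendsto_const_nhds (x := 12*ℓ₁*(1+‖p.2‖^2))).mul h1).add
        (((tendsto_const_nhds (x := 2*ℓ₁)).mul (h1.mul h2)).add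
          ((tendsto_const_nhds (x := ℓ₁/2)).mul hdt))
      simp only [mul_zero, add_zero, zero_add] at this
      refine Tendsto.congr (fun h => by ring) this
  · apply squeeze_zero' (Eventually.of_forall fun h =>
      integral_nonneg fun t => by positivity)
      (g := fun h => 6*ℓ₁^2*(eSeq ps p h)^2*(1+‖p.2‖^2)
        + (6*ℓ₁^2*(eSeq ps p h)^2 + 2*ℓ₁^2)*(dSeq ps p h)^2)
    · filter_upwards [hev] with h hh
      set e := eSeq ps p h with he_def
      set d := dSeq ps p h with hd_def
      have he0 : 0 ≤ e := eSeq_nonneg h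
      have hd0 : 0 ≤ d := dSeq_nonneg h
      set C0 : ℝ := 6*ℓ₁^2*e^2 with hC0
      set C1 : ℝ := 6*ℓ₁^2*e^2 + 2*ℓ₁^2 with hC1
      have hi1 : Integrable (fun t => C0*‖p.2 t‖^2) μ01 := (aux_integrable_sq p.2).const_mul C0
      have hi2 : Integrable (fun t => C1*‖((ps h).2 - p.2 : Lp (E n) 2 μ01) t‖^2) μ01 :=
        (aux_integrable_sq ((ps h).2 - p.2)).const_mul C1
      have hi01 : Integrable (fun t => C0 + C0*‖p.2 t‖^2) μ01 := (integrable_const C0).add hi1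
      have hgint : Integrable
          (fun t => C0 + C0*‖p.2 t‖^2 + C1*‖((ps h).2 - p.2 : Lp (E n) 2 μ01) t‖^2) μ01 :=
        hi01.add hi2
      have hIle : ∫ t, ‖Lv t (pathH (ps h) t) ((ps h).2 t) - Lv t (pathH p t) (p.2 t)‖^2 ∂μ01
          ≤ C0 + C0*‖p.2‖^2 + C1*‖((ps h).2 - p.2 : Lp (E n) 2 μ01)‖^2 := by
        have hInt : ∫ t, (C0 + C0*‖p.2 t‖^2
              + C1*‖((ps h).2 - p.2 : Lp (E n) 2 μ01) t‖^2) ∂μ01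
            = C0 + C0*‖p.2‖^2 + C1*‖((ps h).2 - p.2 : Lp (E n) 2 μ01)‖^2 := by
          rw [integral_add hi01 hi2, integral_add (integrable_const C0) hi1,
            integral_const, integral_const_mul, integral_const_mul,
            aux_integral_sq, aux_integral_sq]
          simp
        rw [← hInt]
        refine integral_mono_of_nonneg (Eventually.of_forall fun t => by positivity) hgint ?_
        filter_upwards [ae_restrict_mem measurableSet_Icc, Lp.coeFn_sub (ps h).2 p.2]
          with t ht hsub
        have hq2U : pathH p t ∈ U := hp t ht
        have hE' : ‖pathH (ps h) t - pathH p t‖ ≤ e := path_bound h t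
        have hq1b : pathH (ps h) t ∈ Metric.ball (pathH p t) ε := by
          rw [Metric.mem_ball, dist_eq_norm]; exact lt_of_le_of_lt hE' hh
        have hq2b : pathH p t ∈ Metric.ball (pathH p t) ε := Metric.mem_ball_self hε
        have hAv : ‖Lv t (pathH (ps h) t) ((ps h).2 t) - Lv t (pathH p t) ((ps h).2 t)‖
            ≤ ℓ₁*(1+‖(ps h).2 t‖) * ‖pathH (ps h) t - pathH p t‖ := by
          refine Convex.norm_image_sub_le_of_norm_hasFDerivWithin_le
            (fun z hz => (hLqv t z (hA t ht z hz) ((ps h).2 t)).hasFDerivWithinAt)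
            (fun z hz => (hL1 t ht z (hA t ht z hz) ((ps h).2 t)).2.1)
            (convex_ball _ _) hq2b hq1b
        have hBv : ‖Lv t (pathH p t) ((ps h).2 t) - Lv t (pathH p t) (p.2 t)‖
            ≤ ℓ₁ * ‖(ps h).2 t - p.2 t‖ := by
          refine Convex.norm_image_sub_le_of_norm_hasFDerivWithin_le
            (f' := fun z => Lvv t (pathH p t) z)
            (fun z _ => (hLvv t (pathH p t) hq2U z).hasFDerivWithinAt)
            (fun z _ => (hL1 t ht (pathH p t) hq2U z).1)
            convex_univ (Set.mem_univ (p.2 t)) (Set.mem_univ ((ps h).2 t))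
        have hsub' : ((ps h).2 - p.2 : Lp (E n) 2 μ01) t = (ps h).2 t - p.2 t := by
          simpa using hsub
        have hb' : ‖(ps h).2 t - p.2 t‖ = ‖((ps h).2 - p.2 : Lp (E n) 2 μ01) t‖ := by
          rw [hsub']
        have hVle : ‖(ps h).2 t‖ ≤ ‖p.2 t‖ + ‖((ps h).2 - p.2 : Lp (E n) 2 μ01) t‖ := by
          rw [← hb']
          calc ‖(ps h).2 t‖ = ‖p.2 t + ((ps h).2 t - p.2 t)‖ := by congr 1; abel
          _ ≤ ‖p.2 t‖ + ‖(ps h).2 t - p.2 t‖ := norm_add_le _ _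
        have htri : ‖Lv t (pathH (ps h) t) ((ps h).2 t) - Lv t (pathH p t) (p.2 t)‖
            ≤ ‖Lv t (pathH (ps h) t) ((ps h).2 t) - Lv t (pathH p t) ((ps h).2 t)‖
              + ‖Lv t (pathH p t) ((ps h).2 t) - Lv t (pathH p t) (p.2 t)‖ :=
          norm_sub_le_norm_sub_add_norm_sub _ _ _
        have hsum : ‖Lv t (pathH (ps h) t) ((ps h).2 t) - Lv t (pathH p t) (p.2 t)‖
            ≤ ℓ₁*(1+‖(ps h).2 t‖)*e + ℓ₁*‖((ps h).2 - p.2 : Lp (E n) 2 μ01) t‖ := by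
          have hAv' : ‖Lv t (pathH (ps h) t) ((ps h).2 t) - Lv t (pathH p t) ((ps h).2 t)‖
              ≤ ℓ₁*(1+‖(ps h).2 t‖) * e :=
            hAv.trans (mul_le_mul_of_nonneg_left hE' (by positivity))
          rw [hb'] at hBv
          linarith
        have hsq : ‖Lv t (pathH (ps h) t) ((ps h).2 t) - Lv t (pathH p t) (p.2 t)‖^2
            ≤ (ℓ₁*(1+‖(ps h).2 t‖)*e + ℓ₁*‖((ps h).2 - p.2 : Lp (E n) 2 μ01) t‖)^2 :=
          pow_le_pow_left₀ (norm_nonneg _) hsum 2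
        have hkey := aux_v_est ℓ₁ e (‖p.2 t‖) (‖((ps h).2 - p.2 : Lp (E n) 2 μ01) t‖)
          (‖(ps h).2 t‖) e hℓ₁ he0 (norm_nonneg _) (norm_nonneg _) (norm_nonneg _) hVle
          he0 le_rfl
        rw [hC0, hC1]
        linarith
      refine hIle.trans ?_
      have hu2 : ‖((ps h).2 - p.2 : Lp (E n) 2 μ01)‖^2 ≤ d^2 := by
        have := uSeq_norm_le (ps := ps) (p := p) h
        nlinarith [norm_nonneg ((ps h).2 - p.2)]
      have hC10 : 0 ≤ C1 := by rw [hC1]; positivity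
      have h2a : C1*‖((ps h).2 - p.2 : Lp (E n) 2 μ01)‖^2 ≤ C1*d^2 :=
        mul_le_mul_of_nonneg_left hu2 hC10
      rw [hC0, hC1] at *
      nlinarith [sq_nonneg (‖p.2‖), mul_nonneg (mul_nonneg (by positivity : (0:ℝ) ≤ 6*ℓ₁^2) (sq_nonneg e)) (sq_nonneg (‖p.2‖))]
    · have he2 : Tendsto (fun h => (eSeq ps p h)^2) atTop (𝓝 0) := by
        have := het.mul het
        simpa [pow_two] using this
      have hd2 : Tendsto (fun h => (dSeq ps p h)^2) atTop (𝓝 0) := by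
        have := hdt.mul hdt
        simpa [pow_two] using this
      have := ((tendsto_const_nhds (x := 6*ℓ₁^2*(1+‖p.2‖^2))).mul he2).add
        (((tendsto_const_nhds (x := 6*ℓ₁^2)).mul (he2.mul hd2)).add
          ((tendsto_const_nhds (x := 2*ℓ₁^2)).mul hd2))
      simp only [mul_zero, add_zero, zero_add] at this
      refine Tendsto.congr (fun h => by ring) this
end
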